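/- arXiv:2104.07727 — 9 statements merged into one kernel-verified Lean document; each statement's English description precedes it below -/
import Mathlib

section
/- Let k ≥ 2 be an integer. The vector e_A ∈ ℝ^(k+3) whose entry at vertex A equals 1 and whose all other entries equal 0 is the unique PageRank vector of Γ(k) for α = 1; that is, e_A has nonnegative entries summing to 1 and satisfies R_1 e_A = e_A, and any vector with nonnegative entries summing to 1 fixed by R_1 equals e_A. -/
/-- Arc relation of the graph `Γ(k)` on vertex indices `0, ..., k+2`, where
vertex `0` is `C1`, vertex `1` is `C2`, vertex `i+1` is `B_i` for `1 ≤ i ≤ k`,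
and vertex `k+2` is `A`.  `PRadj k j i` holds iff there is an arc from `j` to `i`. -/
def PRadj (k j i : ℕ) : Prop :=
  (j = 0 ∧ (i = 0 ∨ i = 1)) ∨
  (j = 1 ∧ (i = 0 ∨ i = 1 ∨ i = 2)) ∨
  (2 ≤ j ∧ j ≤ k + 1 ∧ (i = 0 ∨ i = 1 ∨ i = j + 1)) ∨
  (j = k + 2 ∧ i = k + 2)

instance (k j i : ℕ) : Decidable (PRadj k j i) := by unfold PRadj; infer_instance

/-- Out-degree of vertex `j` in `Γ(k)`:  `deg(C1) = 2`, `deg(A) = 1`, all others `3`. -/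
def PRdeg (k j : ℕ) : ℕ := if j = 0 then 2 else if j = k + 2 then 1 else 3

/-- The PageRank matrix `R_α` of `Γ(k)`:  entry `(i, j)` is
`α / deg(j) + (1 - α)/(k+3)` if there is an arc from `j` to `i`, and `(1 - α)/(k+3)`
otherwise. -/
noncomputable def PRmat (k : ℕ) (α : ℝ) : Matrix (Fin (k + 3)) (Fin (k + 3)) ℝ :=
  fun i j =>
    if PRadj k j.1 i.1 then α / (PRdeg k j.1 : ℝ) + (1 - α) / ((k : ℝ) + 3)
    else (1 - α) / ((k : ℝ) + 3)

/-- `π` is a PageRank vector of `Γ(k)` for jumping parameter `α`:  it has nonnegative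
entries summing to `1` and satisfies `R_α π = π`. -/
def IsPageRank (k : ℕ) (α : ℝ) (π : Fin (k + 3) → ℝ) : Prop :=
  (∀ v, 0 ≤ π v) ∧ (∑ v, π v = 1) ∧ (PRmat k α).mulVec π = π

lemma PRmat_one (k : ℕ) (i j : Fin (k + 3)) :
    PRmat k 1 i j = if PRadj k j.1 i.1 then 1 / (PRdeg k j.1 : ℝ) else 0 := by
  simp [PRmat]

lemma PRrow (k : ℕ) (π : Fin (k + 3) → ℝ) (h : (PRmat k 1).mulVec π = π)
    (i : Fin (k + 3)) : ∑ j, PRmat k 1 i j * π j = π i := by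
  conv_rhs => rw [← h]
  simp [Matrix.mulVec, dotProduct]

/-- For `k ≥ 2`, the vector with value `1` at `A` and `0` elsewhere is the unique
PageRank vector of `Γ(k)` for `α = 1`. -/
theorem pagerank_alpha_one_unique (k : ℕ) (hk : 2 ≤ k) :
    IsPageRank k 1 (fun v => if v.1 = k + 2 then (1 : ℝ) else 0) ∧
    ∀ π : Fin (k + 3) → ℝ, IsPageRank k 1 π →
      π = fun v => if v.1 = k + 2 then (1 : ℝ) else 0 := by
  have hA : ∀ i : Fin (k + 3), PRadj k (k + 2) i.1 ↔ i.1 = k + 2 := by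
    intro i
    unfold PRadj
    omega
  constructor
  · refine ⟨fun v => by positivity, ?_, ?_⟩
    · rw [Fintype.sum_eq_single (⟨k + 2, by omega⟩ : Fin (k + 3))]
      · simp
      · intro b hb
        have hb' : b.1 ≠ k + 2 := fun h => hb (Fin.ext h)
        simp [hb']
    · funext i
      show ∑ j, PRmat k 1 i j * _ = _
      rw [Fintype.sum_eq_single (⟨k + 2, by omega⟩ : Fin (k + 3))]
      · simp only [PRmat_one, hA, PRdeg]
        by_cases hi : i.1 = k + 2 <;> simp [hi]
      · intro b hb
        have hb' : b.1 ≠ k + 2 := fun h => hb (Fin.ext h)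
        simp [hb']
  · rintro π ⟨-, hsum, hfix⟩
    -- step: for 2 ≤ m ≤ k, π m = 3 π (m+1)
    have hstep : ∀ m : ℕ, ∀ (hm2 : 2 ≤ m) (hmk : m ≤ k),
        π ⟨m, by omega⟩ = 3 * π ⟨m + 1, by omega⟩ := by
      intro m hm2 hmk
      have h := PRrow k π hfix ⟨m + 1, by omega⟩
      rw [Fintype.sum_eq_single (⟨m, by omega⟩ : Fin (k + 3))] at h
      · rw [PRmat_one] at h
        have hadj : PRadj k m (m + 1) := by unfold PRadj; omega
        have hdeg : PRdeg k m = 3 := by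
          unfold PRdeg; rw [if_neg (by omega), if_neg (by omega)]
        rw [if_pos hadj, hdeg] at h
        push_cast at h
        linarith
      · intro b hb
        have hb' : b.1 ≠ m := fun h => hb (Fin.ext h)
        rw [PRmat_one]
        have : ¬ PRadj k b.1 (m + 1) := by
          have := b.2; unfold PRadj; omega
        simp [this]
    -- π (k+1) = 0 from row k+2
    have hk1 : π ⟨k + 1, by omega⟩ = 0 := by
      have h := PRrow k π hfix ⟨k + 2, by omega⟩
      rw [Fintype.sum_eq_add (⟨k + 1, by omega⟩ : Fin (k + 3)) (⟨k + 2, by omega⟩ : Fin (k + 3))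
        (by simp [Fin.ext_iff])] at h
      · simp only [PRmat_one] at h
        have h1 : PRadj k (k + 1) (k + 2) := by unfold PRadj; omega
        have h2 : PRadj k (k + 2) (k + 2) := by unfold PRadj; omega
        have hd1 : PRdeg k (k + 1) = 3 := by
          unfold PRdeg; rw [if_neg (by omega), if_neg (by omega)]
        have hd2 : PRdeg k (k + 2) = 1 := by
          unfold PRdeg; rw [if_neg (by omega), if_pos rfl]
        rw [if_pos h1, if_pos h2, hd1, hd2] at h
        push_cast at h
        linarith
      · rintro b ⟨hb1, hb2⟩
        have hb1' : b.1 ≠ k + 1 := fun h => hb1 (Fin.ext h)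
        have hb2' : b.1 ≠ k + 2 := fun h => hb2 (Fin.ext h)
        rw [PRmat_one]
        have : ¬ PRadj k b.1 (k + 2) := by
          have := b.2; unfold PRadj; omega
        simp [this]
    -- downward induction: π m = 0 for 2 ≤ m ≤ k+1
    have hzero : ∀ d m : ℕ, ∀ (hd : m + d = k + 1) (hm2 : 2 ≤ m),
        π ⟨m, by omega⟩ = 0 := by
      intro d
      induction d with
      | zero =>
        intro m hm hm2
        have hmeq : m = k + 1 := by omega
        subst hmeq
        exact hk1
      | succ d ih =>
        intro m hm hm2
        have hmk : m ≤ k := by omega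
        rw [hstep m hm2 hmk, ih (m + 1) (by omega) (by omega)]
        ring
    have hz : ∀ m : ℕ, ∀ (hm2 : 2 ≤ m) (hmk : m ≤ k + 1) (h : m < k + 3), π ⟨m, h⟩ = 0 := by
      intro m hm2 hmk h
      exact hzero (k + 1 - m) m (by omega) hm2
    -- π 1 = 0 from row 2
    have hone : π ⟨1, by omega⟩ = 0 := by
      have h := PRrow k π hfix ⟨2, by omega⟩
      rw [Fintype.sum_eq_single (⟨1, by omega⟩ : Fin (k + 3))] at h
      · rw [PRmat_one] at h
        have hadj : PRadj k 1 2 := by unfold PRadj; omega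
        have hdeg : PRdeg k 1 = 3 := by
          unfold PRdeg; rw [if_neg (by omega), if_neg (by omega)]
        rw [if_pos hadj, hdeg] at h
        have h2 : π ⟨2, by omega⟩ = 0 := hz 2 le_rfl (by omega) (by omega)
        rw [h2] at h
        push_cast at h
        linarith
      · intro b hb
        have hb' : b.1 ≠ 1 := fun h => hb (Fin.ext h)
        rw [PRmat_one]
        have : ¬ PRadj k b.1 2 := by
          have := b.2; unfold PRadj; omega
        simp [this]
    -- π 0 = 0 from row 0
    have hzero0 : π ⟨0, by omega⟩ = 0 := by
      have h := PRrow k π hfix ⟨0, by omega⟩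
      rw [Fintype.sum_eq_single (⟨0, by omega⟩ : Fin (k + 3))] at h
      · rw [PRmat_one] at h
        have hadj : PRadj k 0 0 := by unfold PRadj; omega
        have hdeg : PRdeg k 0 = 2 := by unfold PRdeg; rw [if_pos rfl]
        rw [if_pos hadj, hdeg] at h
        push_cast at h
        linarith
      · intro b hb
        have hb' : b.1 ≠ 0 := fun h => hb (Fin.ext h)
        rcases Nat.lt_or_ge b.1 (k + 2) with hb2 | hb2
        · have hbz : π b = 0 := by
            rcases Nat.eq_or_lt_of_le (Nat.one_le_iff_ne_zero.mpr hb') with h1 | h1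
            · have hbe : b = ⟨1, by omega⟩ := Fin.ext h1.symm
              rw [hbe]; exact hone
            · have hbe : b = ⟨b.1, b.2⟩ := rfl
              rw [hbe]; exact hz b.1 (by omega) (by omega) b.2
          rw [hbz, mul_zero]
        · have hb3 : b.1 = k + 2 := by have := b.2; omega
          rw [PRmat_one]
          have : ¬ PRadj k b.1 0 := by unfold PRadj; omega
          simp [this]
    -- all entries except k+2 vanish
    have hvz : ∀ v : Fin (k + 3), v.1 ≠ k + 2 → π v = 0 := by
      intro v hv
      have hve : v = ⟨v.1, v.2⟩ := rfl
      rcases Nat.lt_or_ge v.1 1 with h1 | h1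
      · have h0 : v.1 = 0 := by omega
        have : v = ⟨0, by omega⟩ := Fin.ext h0
        rw [this]; exact hzero0
      · rcases Nat.eq_or_lt_of_le h1 with h2 | h2
        · have : v = ⟨1, by omega⟩ := Fin.ext h2.symm
          rw [this]; exact hone
        · rw [hve]
          exact hz v.1 (by omega) (by have := v.2; omega) v.2
    have hlast : π ⟨k + 2, by omega⟩ = 1 := by
      rw [← hsum]
      rw [Fintype.sum_eq_single (⟨k + 2, by omega⟩ : Fin (k + 3))]
      intro b hb
      exact hvz b (fun h => hb (Fin.ext h))
    funext v
    by_cases hv : v.1 = k + 2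
    · have hve : v = ⟨k + 2, by omega⟩ := Fin.ext hv
      rw [hve, hlast]
      simp
    · rw [hvz v hv]
      simp [hv]
end

section
/- Let k ≥ 2 be an integer and let π be the PageRank vector of Γ(k) for α = 1 − 1/k. Then π_{C1} = π_{C2}. -/
/-- For `k ≥ 2` and `α = 1 - 1/k`, the PageRank vector satisfies `π_{C1} = π_{C2}`. -/
theorem pagerank_C1_eq_C2 (k : ℕ) (hk : 2 ≤ k) (π : Fin (k + 3) → ℝ)
    (hπ : IsPageRank k (1 - 1 / (k : ℝ)) π) :
    π ⟨0, by omega⟩ = π ⟨1, by omega⟩ := by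
  obtain ⟨-, -, h⟩ := hπ
  have h0 := congrFun h ⟨0, by omega⟩
  have h1 := congrFun h ⟨1, by omega⟩
  rw [← h0, ← h1]
  unfold Matrix.mulVec dotProduct
  apply Finset.sum_congr rfl
  intro j _
  congr 1
  unfold PRmat
  have hiff : PRadj k j.1 0 ↔ PRadj k j.1 1 := by
    unfold PRadj; omega
  simp only []
  split_ifs with ha hb hb
  · rfl
  · exact absurd (hiff.mp ha) hb
  · exact absurd (hiff.mpr hb) ha
  · rfl
end

section
/- Let k ≥ 2 be an integer and let π be the PageRank vector of Γ(k) for α = 1 − 1/k. Then for every i with 1 ≤ i ≤ k, π_{Bi} > ((1 − 1/k)/3)^i · π_{C2}. -/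
/-- For `k ≥ 2` and `α = 1 - 1/k`, the PageRank vector satisfies
`π_{Bi} > ((1 - 1/k)/3)^i · π_{C2}` for all `1 ≤ i ≤ k`. -/
theorem pagerank_Bi_lower_bound (k : ℕ) (hk : 2 ≤ k) (π : Fin (k + 3) → ℝ)
    (hπ : IsPageRank k (1 - 1 / (k : ℝ)) π) :
    ∀ i : ℕ, ∀ _hi1 : 1 ≤ i, ∀ _hik : i ≤ k,
      π ⟨i + 1, by omega⟩ > ((1 - 1 / (k : ℝ)) / 3) ^ i * π ⟨1, by omega⟩ := by
  obtain ⟨hpos, hsum, heig⟩ := hπ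
  set α : ℝ := 1 - 1 / (k : ℝ) with hα
  have hk0 : (0:ℝ) < k := by
    have : (2:ℝ) ≤ k := by exact_mod_cast hk
    linarith
  have hαpos : 0 < α := by
    have h2 : (2:ℝ) ≤ k := by exact_mod_cast hk
    have : 1 / (k:ℝ) ≤ 1 / 2 := by
      apply one_div_le_one_div_of_le <;> linarith
    rw [hα]; linarith
  have hc : 0 < (1 - α) / ((k:ℝ) + 3) := by
    have : 1 - α = 1 / (k:ℝ) := by rw [hα]; ring
    rw [this]
    positivity
  -- key recurrence
  have key : ∀ i : ℕ, 1 ≤ i → i ≤ k → ∀ (hi : i + 1 < k + 3) (hi' : i < k + 3),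
      π ⟨i + 1, hi⟩ = α / 3 * π ⟨i, hi'⟩ + (1 - α) / ((k:ℝ) + 3) := by
    intro i h1 h2 hi hi'
    have hrow := congrFun heig ⟨i + 1, hi⟩
    simp only [Matrix.mulVec, dotProduct] at hrow
    have split : ∀ j : Fin (k + 3), PRmat k α ⟨i + 1, hi⟩ j * π j
        = (if PRadj k j.1 (i + 1) then α / 3 * π j else 0)
          + (1 - α) / ((k:ℝ) + 3) * π j := by
      intro j
      by_cases h : PRadj k j.1 (i + 1)
      · have hj0 : j.1 ≠ 0 := by unfold PRadj at h; omega
        have hjk : j.1 ≠ k + 2 := by unfold PRadj at h; omega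
        have hdeg : PRdeg k j.1 = 3 := by unfold PRdeg; simp [hj0, hjk]
        simp only [PRmat, h, if_true, hdeg]
        push_cast
        ring
      · simp only [PRmat, h, if_false]
        ring
    rw [Finset.sum_congr rfl (fun j _ => split j), Finset.sum_add_distrib,
      ← Finset.mul_sum, hsum, mul_one] at hrow
    have honly : ∑ j : Fin (k + 3), (if PRadj k j.1 (i + 1) then α / 3 * π j else 0)
        = α / 3 * π ⟨i, hi'⟩ := by
      rw [Finset.sum_eq_single (⟨i, hi'⟩ : Fin (k + 3))]
      · have hadj : PRadj k i (i + 1) := by unfold PRadj; omega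
        simp [hadj]
      · intro j _ hne
        have hnadj : ¬ PRadj k j.1 (i + 1) := by
          intro h
          apply hne
          apply Fin.ext
          show j.1 = i
          unfold PRadj at h
          omega
        simp [hnadj]
      · intro h; exact absurd (Finset.mem_univ _) h
    rw [honly] at hrow
    linarith
  intro i
  induction i with
  | zero => intro h; omega
  | succ n ih =>
    intro _ hik
    rcases Nat.eq_zero_or_pos n with hn | hn
    · subst hn
      have h := key 1 le_rfl (by omega) (by omega) (by omega)
      have := hpos ⟨1, by omega⟩
      rw [pow_one]
      calc α / 3 * π ⟨1, by omega⟩ < α / 3 * π ⟨1, by omega⟩ + (1 - α) / ((k:ℝ) + 3) := by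
            linarith
        _ = π ⟨2, by omega⟩ := (key 1 le_rfl (by omega) (by omega) (by omega)).symm
    · have hrec := key (n + 1) (by omega) hik (by omega) (by omega)
      have hih := ih hn (by omega)
      have hstep : α / 3 * ((α / 3) ^ n * π ⟨1, by omega⟩) < α / 3 * π ⟨n + 1, by omega⟩ := by
        apply mul_lt_mul_of_pos_left hih (div_pos hαpos (by norm_num))
      calc (α / 3) ^ (n + 1) * π ⟨1, by omega⟩
          = α / 3 * ((α / 3) ^ n * π ⟨1, by omega⟩) := by ring
        _ < α / 3 * π ⟨n + 1, by omega⟩ := hstep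
        _ < α / 3 * π ⟨n + 1, by omega⟩ + (1 - α) / ((k:ℝ) + 3) := by linarith
        _ = π ⟨n + 1 + 1, by omega⟩ := hrec.symm
end

section
/- Let k ≥ 2 be an integer and let π be the PageRank vector of Γ(k) for α = 1 − 1/k. Then π_A < k·(1/3)^k + 3/(2(k+3)). -/
/-- For `k ≥ 2` and `α = 1 - 1/k`, the PageRank vector satisfies
`π_A < k·(1/3)^k + 3/(2(k+3))`. -/
theorem pagerank_A_upper_bound (k : ℕ) (hk : 2 ≤ k) (π : Fin (k + 3) → ℝ)
    (hπ : IsPageRank k (1 - 1 / (k : ℝ)) π) :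
    π ⟨k + 2, by omega⟩ < (k : ℝ) * (1 / 3 : ℝ) ^ k + 3 / (2 * ((k : ℝ) + 3)) := by
  obtain ⟨hpos, hsum, hmv⟩ := hπ
  set α : ℝ := 1 - 1 / (k : ℝ) with hαdef
  set K : ℝ := (k : ℝ) with hKdef
  set c : ℝ := (1 - α) / (K + 3) with hcdef
  clear_value c
  have hK2 : (2:ℝ) ≤ K := by rw [hKdef]; exact_mod_cast hk
  have hK0 : (0:ℝ) < K := by linarith
  have hKne : K ≠ 0 := ne_of_gt hK0
  have h1α : 1 - α = 1 / K := by rw [hαdef]; ring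
  have hα0 : 0 ≤ α := by
    have h : 1 / K ≤ 1 := by rw [div_le_one hK0]; linarith
    rw [hαdef]; linarith
  have hα1 : α ≤ 1 := by
    have h : 0 < 1 / K := by positivity
    rw [hαdef]; linarith
  have hcpos : 0 < c := by
    rw [hcdef, h1α]
    exact div_pos (one_div_pos.mpr hK0) (by linarith)
  have hc0 : 0 ≤ c := hcpos.le
  clear_value α K
  -- row equations
  have hrow : ∀ i : Fin (k+3), π i = c +
      ∑ j : Fin (k+3), (if PRadj k j.1 i.1 then α / (PRdeg k j.1 : ℝ) * π j else 0) := by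
    intro i
    have h := congrFun hmv i
    rw [Matrix.mulVec, dotProduct] at h
    rw [← h]
    have key : ∀ j : Fin (k+3), PRmat k α i j * π j
        = c * π j + (if PRadj k j.1 i.1 then α / (PRdeg k j.1 : ℝ) * π j else 0) := by
      intro j
      unfold PRmat
      rw [hcdef, hKdef]
      split_ifs with h' <;> ring
    rw [Finset.sum_congr rfl (fun j _ => key j), Finset.sum_add_distrib,
      ← Finset.mul_sum, hsum, mul_one]
  have hle1 : ∀ v, π v ≤ 1 := by
    intro v
    have h := Finset.single_le_sum (f := π) (fun i _ => hpos i) (Finset.mem_univ v)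
    rw [hsum] at h
    exact h
  -- equation for B vertices
  have hB : ∀ t : ℕ, (ht1 : 1 ≤ t) → (htk : t ≤ k) →
      π ⟨t+1, by omega⟩ = c + α/3 * π ⟨t, by omega⟩ := by
    intro t ht1 htk
    have h0 := hrow ⟨t+1, by omega⟩
    have hs : ∑ j : Fin (k+3), (if PRadj k j.1 (t+1) then α / (PRdeg k j.1 : ℝ) * π j else 0)
        = α/3 * π ⟨t, by omega⟩ := by
      rw [Finset.sum_eq_single (⟨t, by omega⟩ : Fin (k+3))]
      · have hadj : PRadj k t (t+1) := by unfold PRadj; omega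
        have hdeg : PRdeg k t = 3 := by
          unfold PRdeg; rw [if_neg (by omega), if_neg (by omega)]
        rw [if_pos hadj, hdeg]
        norm_num
      · intro b _ hb
        have hb' : b.1 ≠ t := fun h => hb (Fin.ext h)
        have hbl := b.2
        rw [if_neg (by unfold PRadj; omega)]
      · intro h
        exact absurd (Finset.mem_univ _) h
    rw [hs] at h0
    exact h0
  -- equation for A
  have hA : π ⟨k+2, by omega⟩ = c + α/3 * π ⟨k+1, by omega⟩ + α * π ⟨k+2, by omega⟩ := by
    have h0 := hrow ⟨k+2, by omega⟩
    have hs : ∑ j : Fin (k+3), (if PRadj k j.1 (k+2) then α / (PRdeg k j.1 : ℝ) * π j else 0)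
        = α/3 * π ⟨k+1, by omega⟩ + α * π ⟨k+2, by omega⟩ := by
      have h2 : ∑ j : Fin (k+3), (if PRadj k j.1 (k+2) then α / (PRdeg k j.1 : ℝ) * π j else 0)
          = ∑ j ∈ ({⟨k+1, by omega⟩, ⟨k+2, by omega⟩} : Finset (Fin (k+3))),
              (if PRadj k j.1 (k+2) then α / (PRdeg k j.1 : ℝ) * π j else 0) := by
        refine (Finset.sum_subset (Finset.subset_univ _) ?_).symm
        intro b _ hb
        simp only [Finset.mem_insert, Finset.mem_singleton] at hb
        push_neg at hb
        have hb1 : b.1 ≠ k+1 := fun h => hb.1 (Fin.ext h)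
        have hb2 : b.1 ≠ k+2 := fun h => hb.2 (Fin.ext h)
        have hbl := b.2
        rw [if_neg (by unfold PRadj; omega)]
      rw [h2, Finset.sum_pair (by simp [Fin.ext_iff])]
      have hadj1 : PRadj k (k+1) (k+2) := by unfold PRadj; omega
      have hadj2 : PRadj k (k+2) (k+2) := by unfold PRadj; omega
      have hdeg1 : PRdeg k (k+1) = 3 := by
        unfold PRdeg; rw [if_neg (by omega), if_neg (by omega)]
      have hdeg2 : PRdeg k (k+2) = 1 := by
        unfold PRdeg; rw [if_neg (by omega), if_pos rfl]
      rw [if_pos hadj1, if_pos hadj2, hdeg1, hdeg2]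
      norm_num
    rw [hs] at h0
    linarith [h0]
  -- induction bound for B vertices
  have hind : ∀ t : ℕ, (htk : t ≤ k) → π ⟨t+1, by omega⟩ ≤ 3*c/2 + (α/3)^t := by
    intro t
    induction t with
    | zero =>
      intro _
      have h := hle1 ⟨0+1, by omega⟩
      simp only [pow_zero]
      linarith
    | succ m ih =>
      intro hle
      have heq := hB (m+1) (by omega) hle
      have hih := ih (by omega)
      have h3 : (0:ℝ) ≤ (α/3)^m := by positivity
      have h4 : α/3 * π ⟨m+1, by omega⟩ ≤ α/3 * (3*c/2 + (α/3)^m) :=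
        mul_le_mul_of_nonneg_left hih (by positivity)
      have h5 : α * c ≤ c := by nlinarith
      rw [pow_succ, heq]
      have h6 : α/3 * (3*c/2 + (α/3)^m) = α*c/2 + (α/3)^m * (α/3) := by ring
      linarith
  have hBk := hind k le_rfl
  -- pull everything together
  set P := π ⟨k+2, by omega⟩ with hP
  set X := π ⟨k+1, by omega⟩ with hX
  set q : ℝ := (1/3:ℝ)^k with hq
  clear_value P X q
  have hq0 : 0 < q := by rw [hq]; positivity
  have hpq : (α/3)^k ≤ q := by
    rw [hq]
    exact pow_le_pow_left₀ (by positivity) (by linarith) k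
  have hK3 : (0:ℝ) < K + 3 := by linarith
  have hK1 : (1-α)*K = 1 := by rw [h1α]; field_simp
  have e2 : K * c = 1/(K+3) := by
    rw [hcdef, h1α]; field_simp
  have e3 : α * K = K - 1 := by
    rw [hαdef, hKdef]; field_simp
  have e1 : P = K*c + α*K/3*X := by
    have h1 : (1-α)*P = c + α/3*X := by linarith [hA]
    calc P = ((1-α)*K)*P := by rw [hK1]; ring
      _ = K*((1-α)*P) := by ring
      _ = K*(c + α/3*X) := by rw [h1]
      _ = K*c + α*K/3*X := by ring
  have e4 : P ≤ 1/(K+3) + (K-1)*c/2 + (K-1)/3*q := by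
    have hXb : X ≤ 3*c/2 + q := by linarith [hBk]
    have h6 : α*K/3*X ≤ α*K/3*(3*c/2+q) :=
      mul_le_mul_of_nonneg_left hXb (by positivity)
    calc P = K*c + α*K/3*X := e1
      _ ≤ K*c + α*K/3*(3*c/2+q) := by linarith
      _ = K*c + (α*K)*c/2 + (α*K)/3*q := by ring
      _ = 1/(K+3) + (K-1)*c/2 + (K-1)/3*q := by rw [e2, e3]
  have e5 : (K-1)*c < 1/(K+3) := by
    have h7 : (K-1)*c = K*c - c := by ring
    linarith [e2]
  have e6 : (K-1)/3*q ≤ K*q :=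
    mul_le_mul_of_nonneg_right (by linarith) hq0.le
  have e7 : 3/(2*(K+3)) = (3/2) * (1/(K+3)) := by
    rw [one_div, div_eq_mul_inv, mul_inv]
    ring
  rw [e7]
  linarith [e4, e5, e6]
end

section
/- For each integer k ≥ 2, let π(k) be the PageRank vector of Γ(k) for α = 1 − 1/k. Then π(k)_{C1} → 2/5 and π(k)_{C2} → 2/5 as k → ∞. -/
lemma sum_if_val {n : ℕ} (c : ℕ) (hc : c < n) (f : Fin n → ℝ) :
    ∑ j : Fin n, (if j.1 = c then f j else 0) = f ⟨c, hc⟩ := by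
  rw [Finset.sum_eq_single (⟨c, hc⟩ : Fin n)]
  · simp
  · intro b _ hb
    rw [if_neg]
    exact fun h => hb (Fin.ext h)
  · simp

lemma PRmat_row_zero {k : ℕ} (hk : 2 ≤ k) (α : ℝ) (j : Fin (k + 3)) :
    PRmat k α ⟨0, by omega⟩ j = ((1 - α) / ((k : ℝ) + 3) + α / 3)
      + (if j.1 = 0 then α / 6 else 0) + (if j.1 = k + 2 then -(α / 3) else 0) := by
  have hj := j.2
  unfold PRmat PRdeg
  by_cases h0 : j.1 = 0
  · have hadj : PRadj k j.1 0 := by unfold PRadj; omega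
    rw [if_pos hadj, if_pos h0, if_pos h0, if_neg (by omega)]
    push_cast
    ring
  · by_cases hl : j.1 = k + 2
    · have hadj : ¬ PRadj k j.1 0 := by unfold PRadj; omega
      rw [if_neg hadj, if_neg h0, if_pos hl]
      ring
    · have hadj : PRadj k j.1 0 := by unfold PRadj; omega
      rw [if_pos hadj, if_neg h0, if_neg h0, if_neg hl, if_neg hl]
      push_cast
      ring

lemma PRmat_row_one {k : ℕ} (hk : 2 ≤ k) (α : ℝ) (j : Fin (k + 3)) :
    PRmat k α ⟨1, by omega⟩ j = PRmat k α ⟨0, by omega⟩ j := by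
  have hj := j.2
  unfold PRmat
  have : PRadj k j.1 1 ↔ PRadj k j.1 0 := by unfold PRadj; omega
  simp only [this]

lemma PRmat_row_mid {k : ℕ} (hk : 2 ≤ k) (α : ℝ) {i : ℕ} (h3 : 3 ≤ i) (hik : i ≤ k + 1)
    (j : Fin (k + 3)) :
    PRmat k α ⟨i, by omega⟩ j = (1 - α) / ((k : ℝ) + 3)
      + (if j.1 = i - 1 then α / 3 else 0) := by
  have hj := j.2
  unfold PRmat PRdeg
  by_cases h : j.1 = i - 1
  · have hadj : PRadj k j.1 i := by unfold PRadj; omega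
    rw [if_pos hadj, if_neg (by omega), if_neg (by omega), if_pos h]
    push_cast
    ring
  · have hadj : ¬ PRadj k j.1 i := by unfold PRadj; omega
    rw [if_neg hadj, if_neg h]
    ring

lemma PRmat_row_last {k : ℕ} (hk : 2 ≤ k) (α : ℝ) (j : Fin (k + 3)) :
    PRmat k α ⟨k + 2, by omega⟩ j = (1 - α) / ((k : ℝ) + 3)
      + (if j.1 = k + 1 then α / 3 else 0) + (if j.1 = k + 2 then α else 0) := by
  have hj := j.2
  unfold PRmat PRdeg
  by_cases h1 : j.1 = k + 1
  · have hadj : PRadj k j.1 (k + 2) := by unfold PRadj; omega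
    rw [if_pos hadj, if_neg (by omega), if_neg (by omega), if_pos h1, if_neg (by omega)]
    push_cast
    ring
  · by_cases h2 : j.1 = k + 2
    · have hadj : PRadj k j.1 (k + 2) := by unfold PRadj; omega
      rw [if_pos hadj, if_neg (by omega), if_pos h2, if_neg h1, if_pos h2]
      push_cast
      ring
    · have hadj : ¬ PRadj k j.1 (k + 2) := by unfold PRadj; omega
      rw [if_neg hadj, if_neg h1, if_neg h2]
      ring

section
variable {k : ℕ} {α : ℝ} {π : Fin (k + 3) → ℝ}

lemma PR_eq0 (hk : 2 ≤ k) (h : IsPageRank k α π) :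
    π ⟨0, by omega⟩ = ((1 - α) / ((k : ℝ) + 3) + α / 3) + α / 6 * π ⟨0, by omega⟩
      - α / 3 * π ⟨k + 2, by omega⟩ := by
  obtain ⟨hnn, hsum, heq⟩ := h
  have h0 := congrFun heq ⟨0, by omega⟩
  rw [Matrix.mulVec, dotProduct] at h0
  have hrw : ∀ j : Fin (k + 3), PRmat k α ⟨0, by omega⟩ j * π j
      = ((1 - α) / ((k : ℝ) + 3) + α / 3) * π j
        + (if j.1 = 0 then α / 6 * π j else 0)
        + (if j.1 = k + 2 then -(α / 3) * π j else 0) := by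
    intro j
    rw [PRmat_row_zero hk]
    split <;> split <;> ring
  rw [Finset.sum_congr rfl (fun j _ => hrw j), Finset.sum_add_distrib,
    Finset.sum_add_distrib, ← Finset.mul_sum, hsum,
    sum_if_val 0 (by omega), sum_if_val (k + 2) (by omega)] at h0
  linarith [h0]

lemma PR_eq1 (hk : 2 ≤ k) (h : IsPageRank k α π) :
    π ⟨1, by omega⟩ = π ⟨0, by omega⟩ := by
  obtain ⟨hnn, hsum, heq⟩ := h
  have h0 := congrFun heq ⟨0, by omega⟩
  have h1 := congrFun heq ⟨1, by omega⟩
  rw [Matrix.mulVec, dotProduct] at h0 h1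
  rw [Finset.sum_congr rfl (fun j _ => by rw [PRmat_row_one hk])] at h1
  rw [← h1, ← h0]

lemma PR_eqMid (hk : 2 ≤ k) (h : IsPageRank k α π) {i : ℕ} (h3 : 3 ≤ i) (hik : i ≤ k + 1) :
    π ⟨i, by omega⟩ = (1 - α) / ((k : ℝ) + 3) + α / 3 * π ⟨i - 1, by omega⟩ := by
  obtain ⟨hnn, hsum, heq⟩ := h
  have h0 := congrFun heq ⟨i, by omega⟩
  rw [Matrix.mulVec, dotProduct] at h0
  have hrw : ∀ j : Fin (k + 3), PRmat k α ⟨i, by omega⟩ j * π j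
      = (1 - α) / ((k : ℝ) + 3) * π j
        + (if j.1 = i - 1 then α / 3 * π j else 0) := by
    intro j
    rw [PRmat_row_mid hk α h3 hik]
    split <;> ring
  rw [Finset.sum_congr rfl (fun j _ => hrw j), Finset.sum_add_distrib,
    ← Finset.mul_sum, hsum, sum_if_val (i - 1) (by omega)] at h0
  linarith [h0]

lemma PR_eqLast (hk : 2 ≤ k) (h : IsPageRank k α π) :
    π ⟨k + 2, by omega⟩ = (1 - α) / ((k : ℝ) + 3) + α / 3 * π ⟨k + 1, by omega⟩
      + α * π ⟨k + 2, by omega⟩ := by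
  obtain ⟨hnn, hsum, heq⟩ := h
  have h0 := congrFun heq ⟨k + 2, by omega⟩
  rw [Matrix.mulVec, dotProduct] at h0
  have hrw : ∀ j : Fin (k + 3), PRmat k α ⟨k + 2, by omega⟩ j * π j
      = (1 - α) / ((k : ℝ) + 3) * π j
        + (if j.1 = k + 1 then α / 3 * π j else 0)
        + (if j.1 = k + 2 then α * π j else 0) := by
    intro j
    rw [PRmat_row_last hk]
    split <;> split <;> ring
  rw [Finset.sum_congr rfl (fun j _ => hrw j), Finset.sum_add_distrib,
    Finset.sum_add_distrib, ← Finset.mul_sum, hsum,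
    sum_if_val (k + 1) (by omega), sum_if_val (k + 2) (by omega)] at h0
  linarith [h0]

end

section
variable {k : ℕ} {α : ℝ} {π : Fin (k + 3) → ℝ}

lemma PR_bound (hk : 2 ≤ k) (hα0 : 0 ≤ α) (hα1 : α ≤ 1) (h : IsPageRank k α π) :
    ∀ i (_ : 2 ≤ i) (_ : i ≤ k + 1),
      π ⟨i, by omega⟩ ≤ (1/3 : ℝ) ^ (i - 2) + (3/2) * ((1 - α) / ((k : ℝ) + 3)) := by
  have hs0 : (0:ℝ) ≤ (1 - α) / ((k : ℝ) + 3) := by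
    apply div_nonneg (by linarith) (by positivity)
  intro i hi
  induction i, hi using Nat.le_induction with
  | base =>
    intro _
    have h2 : π ⟨2, by omega⟩ ≤ 1 := by
      rw [← h.2.1]
      exact Finset.single_le_sum (fun j _ => h.1 j) (Finset.mem_univ _)
    simpa using le_trans h2 (by linarith)
  | succ n hn ih =>
    intro hnk
    have ihn := ih (by omega)
    have heq := PR_eqMid hk h (i := n + 1) (by omega) (by omega)
    simp only [Nat.add_sub_cancel] at heq
    have hpn : 0 ≤ π ⟨n, by omega⟩ := h.1 _
    have hmul : α / 3 * π ⟨n, by omega⟩ ≤ 1 / 3 * π ⟨n, by omega⟩ := by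
      apply mul_le_mul_of_nonneg_right (by linarith) hpn
    have hpow : (1/3 : ℝ) ^ (n + 1 - 2) = (1/3 : ℝ) ^ (n - 2) * (1/3) := by
      have : n + 1 - 2 = (n - 2) + 1 := by omega
      rw [this, pow_succ]
    rw [heq, hpow]
    nlinarith [ihn]

end

/-- If `π k` is the PageRank vector of `Γ(k)` for `α = 1 - 1/k` (for each `k ≥ 2`),
then `π(k)_{C1} → 2/5` and `π(k)_{C2} → 2/5` as `k → ∞`. -/
theorem pagerank_C1_C2_tendsto (π : ∀ k : ℕ, Fin (k + 3) → ℝ)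
    (hπ : ∀ k, 2 ≤ k → IsPageRank k (1 - 1 / (k : ℝ)) (π k)) :
    Filter.Tendsto (fun k : ℕ => π k ⟨0, by omega⟩) Filter.atTop (nhds (2 / 5)) ∧
    Filter.Tendsto (fun k : ℕ => π k ⟨1, by omega⟩) Filter.atTop (nhds (2 / 5)) := by
  -- basic facts for k ≥ 2
  have hbasic : ∀ k : ℕ, 2 ≤ k →
      (2:ℝ) ≤ (k:ℝ) ∧ (0:ℝ) < (k:ℝ) ∧ 1/(k:ℝ) ≤ 1/2 ∧ (0:ℝ) < 1/(k:ℝ) := by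
    intro k hk
    have hK2 : (2:ℝ) ≤ (k:ℝ) := by exact_mod_cast hk
    have hKpos : (0:ℝ) < (k:ℝ) := by linarith
    refine ⟨hK2, hKpos, ?_, by positivity⟩
    rw [div_le_div_iff₀ hKpos (by norm_num)]
    linarith
  -- the A-entry bound
  have habound : ∀ k : ℕ, 2 ≤ k →
      π k ⟨k + 2, by omega⟩ ≤ 3/2 * ((k:ℝ) + 3)⁻¹ + (k:ℝ) * (1/3)^k := by
    intro k hk
    obtain ⟨hK2, hKpos, hinv, hinv0⟩ := hbasic k hk
    have h := hπ k hk
    set α := 1 - 1/(k:ℝ) with hαdef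
    have hα0 : 0 ≤ α := by rw [hαdef]; linarith
    have hα1 : α ≤ 1 := by rw [hαdef]; linarith
    have hb := PR_bound hk hα0 hα1 h (k+1) (by omega) (by omega)
    have hlast := PR_eqLast hk h
    set b := π k ⟨k+1, by omega⟩ with hbdef
    set a := π k ⟨k+2, by omega⟩ with hadef
    have hbnn : (0:ℝ) ≤ b := h.1 _
    have h1α : 1 - α = 1/(k:ℝ) := by rw [hαdef]; ring
    have h2 : a * (1/(k:ℝ)) = (1-α)/((k:ℝ)+3) + α/3 * b := by
      have e : a * (1/(k:ℝ)) = a - α * a := by rw [hαdef]; ring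
      rw [e]; linarith [hlast]
    have h3 : a = (k:ℝ) * ((1-α)/((k:ℝ)+3) + α/3 * b) := by
      have hKne : ((k:ℝ)) ≠ 0 := ne_of_gt hKpos
      calc a = a * (1/(k:ℝ)) * (k:ℝ) := by field_simp
        _ = ((1-α)/((k:ℝ)+3) + α/3 * b) * (k:ℝ) := by rw [h2]
        _ = (k:ℝ) * ((1-α)/((k:ℝ)+3) + α/3 * b) := by ring
    have hpow : (1/3:ℝ)^(k+1-2) = 3 * (1/3)^k := by
      have e : (1/3:ℝ)^k = (1/3)^(k+1-2) * (1/3) := by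
        conv_lhs => rw [show k = (k+1-2)+1 from by omega]
        rw [pow_succ]
      linarith
    rw [hpow] at hb
    have hKs : (k:ℝ) * ((1-α)/((k:ℝ)+3)) = ((k:ℝ)+3)⁻¹ := by
      rw [h1α]; field_simp
    have hab1 : α/3 * b ≤ 1/3 * b :=
      mul_le_mul_of_nonneg_right (by linarith) hbnn
    have h5 : (k:ℝ) * (α/3 * b) ≤ (k:ℝ)/3 * b := by
      have := mul_le_mul_of_nonneg_left hab1 (le_of_lt hKpos)
      linarith [this]
    have h4 : (k:ℝ)/3 * b ≤ (k:ℝ)/3 * (3 * (1/3)^k + 3/2 * ((1-α)/((k:ℝ)+3))) :=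
      mul_le_mul_of_nonneg_left hb (by positivity)
    nlinarith [h3, h4, h5, hKs]
  -- limit of 1 - 1/k
  have hα : Filter.Tendsto (fun k : ℕ => 1 - 1/(k:ℝ)) Filter.atTop (nhds 1) := by
    simpa using (tendsto_const_nhds (x := (1:ℝ))).sub tendsto_one_div_atTop_nhds_zero_nat
  -- limit of (k+3)⁻¹
  have hinv3 : Filter.Tendsto (fun k : ℕ => ((k:ℝ) + 3)⁻¹) Filter.atTop (nhds 0) := by
    apply Filter.Tendsto.inv_tendsto_atTop
    exact Filter.tendsto_atTop_add_const_right _ 3 tendsto_natCast_atTop_atTop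
  -- the A entry tends to 0
  have ha : Filter.Tendsto (fun k : ℕ => π k ⟨k + 2, by omega⟩) Filter.atTop (nhds 0) := by
    have hbnd : Filter.Tendsto (fun k : ℕ => 3/2 * ((k:ℝ) + 3)⁻¹ + (k:ℝ) * (1/3)^k)
        Filter.atTop (nhds 0) := by
      have h1 := hinv3.const_mul (3/2 : ℝ)
      have h2 := tendsto_self_mul_const_pow_of_lt_one (r := (1/3:ℝ)) (by norm_num) (by norm_num)
      simpa using h1.add h2
    apply tendsto_of_tendsto_of_tendsto_of_le_of_le' tendsto_const_nhds hbnd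
    · exact Filter.eventually_atTop.2 ⟨2, fun k hk => (hπ k hk).1 _⟩
    · exact Filter.eventually_atTop.2 ⟨2, habound⟩
  -- closed form for π₀
  have hc : ∀ k : ℕ, 2 ≤ k → π k ⟨0, by omega⟩ =
      ((1 - (1 - 1/(k:ℝ)))/((k:ℝ) + 3) + (1 - 1/(k:ℝ))/3
        - (1 - 1/(k:ℝ))/3 * π k ⟨k + 2, by omega⟩) / (1 - (1 - 1/(k:ℝ))/6) := by
    intro k hk
    obtain ⟨hK2, hKpos, hinv, hinv0⟩ := hbasic k hk
    have h := PR_eq0 hk (hπ k hk)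
    have hne : (1:ℝ) - (1 - 1/(k:ℝ))/6 ≠ 0 := by
      have : (1 - 1/(k:ℝ))/6 ≤ 1/6 := by linarith
      intro hcon; linarith
    rw [eq_div_iff hne]
    linear_combination h
  -- limit of the closed form
  have hF : Filter.Tendsto (fun k : ℕ =>
      ((1 - (1 - 1/(k:ℝ)))/((k:ℝ) + 3) + (1 - 1/(k:ℝ))/3
        - (1 - 1/(k:ℝ))/3 * π k ⟨k + 2, by omega⟩) / (1 - (1 - 1/(k:ℝ))/6))
      Filter.atTop (nhds (2/5)) := by
    have hs0 : Filter.Tendsto (fun k : ℕ => (1 - (1 - 1/(k:ℝ)))/((k:ℝ) + 3))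
        Filter.atTop (nhds 0) := by
      have base := tendsto_one_div_atTop_nhds_zero_nat.mul hinv3
      have base' : Filter.Tendsto (fun k : ℕ => 1/(k:ℝ) * ((k:ℝ) + 3)⁻¹)
          Filter.atTop (nhds 0) := by simpa using base
      exact base'.congr (fun k => by ring)
    have hnum := (hs0.add (hα.div_const 3)).sub ((hα.div_const 3).mul ha)
    have hden := (tendsto_const_nhds (x := (1:ℝ))).sub (hα.div_const 6)
    have hdiv := hnum.div hden (by norm_num)
    have : (0 + 1/3 - 1/3 * 0) / ((1:ℝ) - 1/6) = 2/5 := by norm_num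
    rwa [this] at hdiv
  constructor
  · exact hF.congr' (Filter.eventually_atTop.2 ⟨2, fun k hk => (hc k hk).symm⟩)
  · exact hF.congr' (Filter.eventually_atTop.2
      ⟨2, fun k hk => (hc k hk).symm.trans (PR_eq1 hk (hπ k hk)).symm⟩)
end

section
/- For each integer k ≥ 2, let π(k) be the PageRank vector of Γ(k) for α = 1 − 1/k. Then the squared Euclidean norm ‖π(k)‖₂² converges to 17/50 as k → ∞. -/
namespace PRaux

noncomputable def bet (k : ℕ) : ℝ := (1 - 1/(k:ℝ))/3
noncomputable def ee (k : ℕ) : ℝ := 3/((2*(k:ℝ)+1)*((k:ℝ)+3))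
noncomputable def A1 (k : ℕ) : ℝ := bet k * ((bet k)^k - 1)/(bet k - 1)
noncomputable def A2 (k : ℕ) : ℝ := (bet k)^2 * (((bet k)^2)^k - 1)/((bet k)^2 - 1)
noncomputable def DD (k : ℕ) : ℝ := 2 + A1 k + k * (bet k)^(k+1)
noncomputable def cc (k : ℕ) : ℝ :=
  (1 - 2*k*ee k + ee k * A1 k + k * ee k * (bet k)^(k+1)) / DD k
noncomputable def dd (k : ℕ) : ℝ := cc k - ee k
noncomputable def aa (k : ℕ) : ℝ := k * (dd k * (bet k)^(k+1) + ee k)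
noncomputable def F (k : ℕ) : ℝ :=
  2*(cc k)^2 + (dd k)^2 * A2 k + 2*(dd k)*(ee k)*(A1 k) + k*(ee k)^2 + (aa k)^2

lemma bet_nonneg {k : ℕ} (hk : 1 ≤ k) : 0 ≤ bet k := by
  have : (1:ℝ) ≤ (k:ℝ) := by exact_mod_cast hk
  have h1 : 1/(k:ℝ) ≤ 1 := by
    rw [div_le_one (by linarith)]; linarith
  unfold bet; linarith

lemma bet_le (k : ℕ) : bet k ≤ 1/3 := by
  have : (0:ℝ) ≤ (k:ℝ) := Nat.cast_nonneg k
  have h1 : 0 ≤ 1/(k:ℝ) := by positivity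
  unfold bet; linarith

lemma hsplit (k : ℕ) (f : ℕ → ℝ) : ∑ n ∈ Finset.range (k+3), f n
    = f 0 + f 1 + (∑ i ∈ Finset.range k, f (i+2)) + f (k+2) := by
  rw [Finset.sum_range_succ, Finset.sum_range_succ', Finset.sum_range_succ']
  have h : ∀ i : ℕ, f (i+1+1) = f (i+2) := fun i => rfl
  simp only [h]
  ring

lemma main (k : ℕ) (hk : 2 ≤ k) (π : Fin (k+3) → ℝ)
    (h : IsPageRank k (1 - 1/(k:ℝ)) π) : ∑ v, π v ^ 2 = F k := by
  obtain ⟨hpos, hsum, heig⟩ := h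
  have hK : (2:ℝ) ≤ (k:ℝ) := by exact_mod_cast hk
  have hK0 : (k:ℝ) ≠ 0 := by linarith
  have hK3 : (k:ℝ) + 3 ≠ 0 := by linarith
  set α : ℝ := 1 - 1/(k:ℝ) with hα
  set s : ℝ := 1/((k:ℝ)*((k:ℝ)+3)) with hs
  have hβα : bet k = α/3 := by rw [hα]; unfold bet; ring
  have h2K1 : (2*(k:ℝ)+1) ≠ 0 := by linarith
  have hβnn : 0 ≤ bet k := bet_nonneg (by omega)
  have hβ1 : bet k ≠ 1 := by have := bet_le k; intro hcon; rw [hcon] at this; linarith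
  have hβsq1 : (bet k)^2 ≠ 1 := by
    have h1 := bet_le k
    intro hcon
    nlinarith
  have hbe : bet k * ee k + s = ee k := by
    rw [hs]; unfold bet ee; field_simp; ring
  -- Step A: componentwise equations
  have hEq : ∀ v : Fin (k+3),
      π v = (∑ j : Fin (k+3), (if PRadj k j.1 v.1 then α/(PRdeg k j.1 : ℝ) else 0) * π j) + s := by
    intro v
    have h1 : ∑ j, PRmat k α v j * π j = π v := congrFun heig v
    rw [← h1]
    have h2 : ∀ j : Fin (k+3), PRmat k α v j * π j
        = (if PRadj k j.1 v.1 then α/(PRdeg k j.1 : ℝ) else 0) * π j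
          + ((1-α)/((k:ℝ)+3)) * π j := by
      intro j
      unfold PRmat
      split <;> ring
    rw [Finset.sum_congr rfl fun j _ => h2 j, Finset.sum_add_distrib, ← Finset.mul_sum,
      hsum, mul_one]
    have hts : (1-α)/((k:ℝ)+3) = s := by rw [hα, hs]; field_simp; ring
    rw [hts]
  set p : ℕ → ℝ := fun n => if hn : n < k+3 then π ⟨n, hn⟩ else 0 with hp
  have hpv : ∀ v : Fin (k+3), π v = p v.1 := by
    intro v
    simp only [hp]
    rw [dif_pos v.2]
  have h0lt : (0:ℕ) < k+3 := by omega
  have h1lt : (1:ℕ) < k+3 := by omega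
  have hp01 : p 0 = p 1 := by
    simp only [hp]
    rw [dif_pos h0lt, dif_pos h1lt, hEq ⟨0,h0lt⟩, hEq ⟨1,h1lt⟩]
    congr 1
    apply Finset.sum_congr rfl
    intro j _
    have hiff : PRadj k j.1 (0:ℕ) ↔ PRadj k j.1 1 := by unfold PRadj; omega
    rw [if_congr hiff rfl rfl]
  have hchain : ∀ i, 1 ≤ i → i ≤ k → p (i+1) = α/3 * p i + s := by
    intro i hi1 hik
    have hlt : i+1 < k+3 := by omega
    have hlt' : i < k+3 := by omega
    simp only [hp]
    rw [dif_pos hlt, dif_pos hlt', hEq ⟨i+1, hlt⟩]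
    congr 1
    have hterm : ∀ j : Fin (k+3),
        (if PRadj k j.1 (i+1) then α/(PRdeg k j.1:ℝ) else 0) * π j
        = if j = ⟨i, hlt'⟩ then α/3 * π j else 0 := by
      intro j
      by_cases hj : j = ⟨i, hlt'⟩
      · subst hj
        simp only [Fin.val_mk]
        have hadj : PRadj k i (i+1) := by unfold PRadj; omega
        have hdeg : PRdeg k i = 3 := by
          unfold PRdeg; rw [if_neg (by omega), if_neg (by omega)]
        rw [if_pos hadj, hdeg]
        simp
      · rw [if_neg hj, if_neg, zero_mul]
        have hji : j.1 ≠ i := fun hh => hj (Fin.ext hh)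
        unfold PRadj; omega
    rw [Finset.sum_congr rfl fun j _ => hterm j,
      Finset.sum_ite_eq' Finset.univ (⟨i, hlt'⟩ : Fin (k+3)) (fun j => α/3 * π j),
      if_pos (Finset.mem_univ _)]
  have hk1lt : k+1 < k+3 := by omega
  have hk2lt : k+2 < k+3 := by omega
  have hpA : p (k+2) = α/3 * p (k+1) + α * p (k+2) + s := by
    simp only [hp]
    rw [dif_pos hk2lt, dif_pos hk1lt]
    conv_lhs => rw [hEq ⟨k+2, hk2lt⟩]
    have hterm : ∀ j : Fin (k+3),
        (if PRadj k j.1 (k+2) then α/(PRdeg k j.1:ℝ) else 0) * π j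
        = (if j = ⟨k+1, hk1lt⟩ then α/3 * π j else 0)
          + (if j = ⟨k+2, hk2lt⟩ then α * π j else 0) := by
      intro j
      by_cases hj1 : j = ⟨k+1, hk1lt⟩
      · subst hj1
        simp only [Fin.val_mk]
        have hadj : PRadj k (k+1) (k+2) := by unfold PRadj; omega
        have hdeg : PRdeg k (k+1) = 3 := by
          unfold PRdeg; rw [if_neg (by omega), if_neg (by omega)]
        rw [if_pos hadj, hdeg, if_neg (show (⟨k+1, hk1lt⟩ : Fin (k+3)) ≠ ⟨k+2, hk2lt⟩ by simp [Fin.ext_iff])]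
        simp
      · by_cases hj2 : j = ⟨k+2, hk2lt⟩
        · subst hj2
          simp only [Fin.val_mk]
          have hadj : PRadj k (k+2) (k+2) := by unfold PRadj; omega
          have hdeg : PRdeg k (k+2) = 1 := by
            unfold PRdeg; rw [if_neg (by omega), if_pos rfl]
          rw [if_pos hadj, hdeg, if_neg hj1]
          simp
        · have hji1 : j.1 ≠ k+1 := fun hh => hj1 (Fin.ext hh)
          have hji2 : j.1 ≠ k+2 := fun hh => hj2 (Fin.ext hh)
          rw [if_neg hj1, if_neg hj2, if_neg, zero_mul, add_zero]
          unfold PRadj; omega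
    rw [Finset.sum_congr rfl fun j _ => hterm j, Finset.sum_add_distrib,
      Finset.sum_ite_eq' Finset.univ (⟨k+1, hk1lt⟩ : Fin (k+3)) (fun j => α/3 * π j),
      Finset.sum_ite_eq' Finset.univ (⟨k+2, hk2lt⟩ : Fin (k+3)) (fun j => α * π j),
      if_pos (Finset.mem_univ _), if_pos (Finset.mem_univ _)]
  -- closed form for the chain
  have hq : ∀ i, i ≤ k → p (i+1) = (p 0 - ee k) * (bet k)^i + ee k := by
    intro i
    induction i with
    | zero => intro _; rw [pow_zero, ← hp01]; ring
    | succ i ih =>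
      intro hik
      rw [hchain (i+1) (by omega) hik, ih (by omega), ← hβα]
      linear_combination hbe
  have ha : p (k+2) = (k:ℝ) * ((p 0 - ee k) * (bet k)^(k+1) + ee k) := by
    have h2 := hpA
    rw [hq k le_rfl, ← hβα, hα] at h2
    have key : (1/(k:ℝ)) * p (k+2) = (p 0 - ee k) * (bet k)^(k+1) + ee k := by
      linear_combination h2 + hbe
    field_simp at key
    linear_combination key
  -- sums
  have hsums : ∑ n ∈ Finset.range (k+3), p n = 1 := by
    rw [← hsum, ← Fin.sum_univ_eq_sum_range p (k+3)]
    exact Finset.sum_congr rfl fun v _ => (hpv v).symm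
  have hA1s : ∑ i ∈ Finset.range k, (bet k)^(i+1) = A1 k := by
    have h1 : ∑ i ∈ Finset.range k, (bet k)^(i+1) = bet k * ∑ i ∈ Finset.range k, (bet k)^i := by
      rw [Finset.mul_sum]
      exact Finset.sum_congr rfl fun i _ => pow_succ' (bet k) i
    rw [h1, geom_sum_eq hβ1]
    unfold A1; ring
  have hA2s : ∑ i ∈ Finset.range k, ((bet k)^(i+1))^2 = A2 k := by
    have h1 : ∀ i : ℕ, ((bet k)^(i+1))^2 = ((bet k)^2)^(i+1) := fun i => pow_right_comm _ _ _
    have h2 : ∑ i ∈ Finset.range k, ((bet k)^2)^(i+1)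
        = (bet k)^2 * ∑ i ∈ Finset.range k, ((bet k)^2)^i := by
      rw [Finset.mul_sum]
      exact Finset.sum_congr rfl fun i _ => pow_succ' _ i
    rw [Finset.sum_congr rfl fun i _ => h1 i, h2, geom_sum_eq hβsq1]
    unfold A2; ring
  have hmid : ∀ i ∈ Finset.range k, p (i+2) = (p 0 - ee k) * (bet k)^(i+1) + ee k := by
    intro i hi
    exact hq (i+1) (by simpa using Finset.mem_range.1 hi)
  have hmidsum : ∑ i ∈ Finset.range k, p (i+2) = (p 0 - ee k) * A1 k + k * ee k := by
    rw [Finset.sum_congr rfl hmid, Finset.sum_add_distrib, ← Finset.mul_sum, hA1s,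
      Finset.sum_const, Finset.card_range, nsmul_eq_mul]
  have hsumEq : p 0 + p 0 + ((p 0 - ee k) * A1 k + k * ee k)
      + (k:ℝ) * ((p 0 - ee k) * (bet k)^(k+1) + ee k) = 1 := by
    rw [← ha, ← hmidsum]
    nth_rewrite 2 [hp01]
    rw [← hsplit k p, hsums]
  -- nonnegativity of DD
  have hA1nn : 0 ≤ A1 k := by
    rw [← hA1s]
    exact Finset.sum_nonneg fun i _ => pow_nonneg hβnn _
  have hDD0 : DD k ≠ 0 := by
    have h1 : 0 ≤ (k:ℝ) * (bet k)^(k+1) := by positivity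
    unfold DD; nlinarith
  have hc : p 0 = cc k := by
    rw [cc, eq_div_iff hDD0, DD]
    linear_combination hsumEq
  -- final computation
  have hmidsq : ∑ i ∈ Finset.range k, (p (i+2))^2
      = (p 0 - ee k)^2 * A2 k + 2*(p 0 - ee k)*(ee k)*(A1 k) + (k:ℝ) * (ee k)^2 := by
    have h1 : ∀ i ∈ Finset.range k, (p (i+2))^2
        = (p 0 - ee k)^2 * ((bet k)^(i+1))^2
          + 2*(p 0 - ee k)*(ee k)*((bet k)^(i+1)) + (ee k)^2 := by
      intro i hi
      rw [hmid i hi]; ring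
    rw [Finset.sum_congr rfl h1, Finset.sum_add_distrib, Finset.sum_add_distrib,
      ← Finset.mul_sum, ← Finset.mul_sum, hA2s, hA1s, Finset.sum_const,
      Finset.card_range, nsmul_eq_mul]
  have hgoal : ∑ v : Fin (k+3), π v ^ 2 = ∑ n ∈ Finset.range (k+3), (p n)^2 := by
    rw [← Fin.sum_univ_eq_sum_range (fun n => (p n)^2) (k+3)]
    exact Finset.sum_congr rfl fun v _ => by rw [hpv v]
  rw [hgoal, hsplit k (fun n => (p n)^2)]
  rw [hmidsq, ha, ← hp01, hc]
  rw [F, aa, dd]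
  ring


lemma abs_bet_le {k : ℕ} (hk : 1 ≤ k) : |bet k| ≤ 1/3 := by
  rw [abs_le]; constructor
  · linarith [bet_nonneg hk]
  · exact bet_le k

lemma h0t : Filter.Tendsto (fun k:ℕ => 1/(k:ℝ)) Filter.atTop (nhds 0) :=
  tendsto_one_div_atTop_nhds_zero_nat

lemma hbt : Filter.Tendsto bet Filter.atTop (nhds (1/3)) := by
  have h1 : Filter.Tendsto (fun k:ℕ => (1 - 1/(k:ℝ))/3) Filter.atTop (nhds ((1-0)/3)) :=
    (tendsto_const_nhds.sub h0t).div_const 3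
  norm_num at h1
  exact h1.congr (fun k => by unfold bet; ring)

lemma hbkt : Filter.Tendsto (fun k:ℕ => bet k ^ k) Filter.atTop (nhds 0) := by
  apply squeeze_zero_norm' (a := fun k:ℕ => (1/3:ℝ)^k)
  · filter_upwards [Filter.eventually_ge_atTop 1] with k hk
    rw [Real.norm_eq_abs, abs_pow]
    exact pow_le_pow_left₀ (abs_nonneg _) (abs_bet_le hk) k
  · exact tendsto_pow_atTop_nhds_zero_of_lt_one (by norm_num) (by norm_num)

lemma hbk1t : Filter.Tendsto (fun k:ℕ => bet k ^ (k+1)) Filter.atTop (nhds 0) := by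
  have h := hbt.mul hbkt
  rw [mul_zero] at h
  exact h.congr (fun k => (pow_succ' (bet k) k).symm)

lemma hkbt : Filter.Tendsto (fun k:ℕ => (k:ℝ) * bet k ^ (k+1)) Filter.atTop (nhds 0) := by
  apply squeeze_zero_norm' (a := fun k:ℕ => (2/3:ℝ)^k)
  · filter_upwards [Filter.eventually_ge_atTop 1] with k hk
    rw [Real.norm_eq_abs, abs_mul, abs_pow, Nat.abs_cast]
    have h1 : |bet k| ^ (k+1) ≤ (1/3:ℝ)^(k+1) :=
      pow_le_pow_left₀ (abs_nonneg _) (abs_bet_le hk) _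
    have h2 : ((1:ℝ)/3)^(k+1) ≤ (1/3:ℝ)^k :=
      pow_le_pow_of_le_one (by norm_num) (by norm_num) (Nat.le_succ k)
    have h3 : (k:ℝ) ≤ 2^k := by
      exact_mod_cast (Nat.lt_two_pow_self (n := k)).le
    calc (k:ℝ) * |bet k|^(k+1) ≤ (2:ℝ)^k * (1/3)^k := by
          apply mul_le_mul h3 (h1.trans h2) (by positivity) (by positivity)
      _ = (2/3:ℝ)^k := by rw [← mul_pow]; norm_num
  · exact tendsto_pow_atTop_nhds_zero_of_lt_one (by norm_num) (by norm_num)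

lemma ee_nonneg (k : ℕ) : 0 ≤ ee k := by
  unfold ee
  have : (0:ℝ) ≤ (k:ℝ) := Nat.cast_nonneg k
  positivity

lemma hket : Filter.Tendsto (fun k:ℕ => (k:ℝ) * ee k) Filter.atTop (nhds 0) := by
  apply squeeze_zero' (g := fun k:ℕ => 3/(k:ℝ))
  · filter_upwards with k
    exact mul_nonneg (Nat.cast_nonneg k) (ee_nonneg k)
  · filter_upwards [Filter.eventually_ge_atTop 1] with k hk
    have hK : (1:ℝ) ≤ (k:ℝ) := by exact_mod_cast hk
    unfold ee
    rw [mul_div_assoc', div_le_div_iff₀ (by positivity) (by linarith)]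
    nlinarith [sq_nonneg ((k:ℝ))]
  · have := h0t.const_mul (3:ℝ)
    rw [mul_zero] at this
    exact this.congr (fun k => by ring)

lemma heet : Filter.Tendsto ee Filter.atTop (nhds 0) := by
  apply squeeze_zero' (g := fun k:ℕ => (k:ℝ) * ee k)
  · filter_upwards with k; exact ee_nonneg k
  · filter_upwards [Filter.eventually_ge_atTop 1] with k hk
    have hK : (1:ℝ) ≤ (k:ℝ) := by exact_mod_cast hk
    nlinarith [mul_nonneg (sub_nonneg.2 hK) (ee_nonneg k)]
  · exact hket

lemma hA1t : Filter.Tendsto A1 Filter.atTop (nhds (1/2)) := by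
  have h := ((hbt.mul (hbkt.sub (tendsto_const_nhds (x := (1:ℝ)))))).div
    (hbt.sub (tendsto_const_nhds (x := (1:ℝ)))) (by norm_num)
  have hval : ((1:ℝ)/3 * (0 - 1))/((1/3:ℝ) - 1) = 1/2 := by norm_num
  rw [hval] at h
  exact h.congr (fun k => rfl)

lemma hA2t : Filter.Tendsto A2 Filter.atTop (nhds (1/8)) := by
  have hb2 : Filter.Tendsto (fun k:ℕ => bet k ^ 2) Filter.atTop (nhds ((1/3:ℝ)^2)) := hbt.pow 2
  have hb2k : Filter.Tendsto (fun k:ℕ => (bet k ^ 2)^k) Filter.atTop (nhds 0) := by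
    have h := hbkt.pow 2
    rw [show ((0:ℝ))^2 = 0 by norm_num] at h
    exact h.congr (fun k => (pow_right_comm (bet k) k 2))
  have h := ((hb2.mul (hb2k.sub (tendsto_const_nhds (x := (1:ℝ)))))).div
    (hb2.sub (tendsto_const_nhds (x := (1:ℝ)))) (by norm_num)
  have hval : (((1:ℝ)/3)^2 * (0 - 1))/(((1/3:ℝ))^2 - 1) = 1/8 := by norm_num
  rw [hval] at h
  exact h.congr (fun k => rfl)

lemma hDt : Filter.Tendsto DD Filter.atTop (nhds (5/2)) := by
  have h := (tendsto_const_nhds (x := (2:ℝ))).add (hA1t.add hkbt)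
  rw [show (2:ℝ) + (1/2 + 0) = 5/2 by norm_num] at h
  exact h.congr (fun k => by unfold DD; ring)

lemma hcct : Filter.Tendsto cc Filter.atTop (nhds (2/5)) := by
  have hnum : Filter.Tendsto
      (fun k:ℕ => 1 - 2*(k:ℝ)*ee k + ee k * A1 k + (k:ℝ) * ee k * (bet k)^(k+1))
      Filter.atTop (nhds 1) := by
    have h := (((tendsto_const_nhds (x := (1:ℝ))).sub (hket.const_mul 2)).add
      (heet.mul hA1t)).add (hket.mul hbk1t)
    rw [show (1:ℝ) - 2*0 + 0*(1/2) + 0*0 = 1 by norm_num] at h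
    exact h.congr (fun k => by ring)
  have h := hnum.div hDt (by norm_num)
  rw [show (1:ℝ)/(5/2) = 2/5 by norm_num] at h
  exact h.congr (fun k => rfl)

lemma hddt : Filter.Tendsto dd Filter.atTop (nhds (2/5)) := by
  have h := hcct.sub heet
  rw [show (2:ℝ)/5 - 0 = 2/5 by norm_num] at h
  exact h

lemma haat : Filter.Tendsto aa Filter.atTop (nhds 0) := by
  have h := (hddt.mul hkbt).add hket
  rw [show (2:ℝ)/5 * 0 + 0 = 0 by norm_num] at h
  exact h.congr (fun k => by unfold aa; ring)

lemma hFt : Filter.Tendsto F Filter.atTop (nhds (17/50)) := by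
  have h := ((((hcct.pow 2).const_mul 2).add ((hddt.pow 2).mul hA2t)).add
    (((hddt.mul heet).const_mul 2).mul hA1t)).add ((hket.mul heet).add (haat.pow 2))
  rw [show (2:ℝ)*(2/5)^2 + (2/5)^2*(1/8) + 2*((2/5)*0)*(1/2) + (0*0 + 0^2) = 17/50 by norm_num] at h
  exact h.congr (fun k => by unfold F; ring)

end PRaux

/-- If `π k` is the PageRank vector of `Γ(k)` for `α = 1 - 1/k` (for each `k ≥ 2`),
then `‖π(k)‖₂² → 17/50` as `k → ∞`. -/
theorem pagerank_sq_norm_tendsto (π : ∀ k : ℕ, Fin (k + 3) → ℝ)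
    (hπ : ∀ k, 2 ≤ k → IsPageRank k (1 - 1 / (k : ℝ)) (π k)) :
    Filter.Tendsto (fun k : ℕ => ∑ v, π k v ^ 2) Filter.atTop (nhds (17 / 50)) := by
  apply PRaux.hFt.congr'
  filter_upwards [Filter.eventually_ge_atTop 2] with k hk
  exact (PRaux.main k hk (π k) (hπ k hk)).symm
end

section
/- For each integer k ≥ 2, let π(k) be the PageRank vector of Γ(k) for α = 1 − 1/k, and let σ(k) be the PageRank vector of Γ(k) for α = 1 given by σ(k)_A = 1 and σ(k)_v = 0 for all other vertices v. Then the Euclidean norm ‖σ(k) − π(k)‖₂ converges to √(67/50) as k → ∞. -/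
lemma adj_mid (k i j : ℕ) (h2 : 2 ≤ i) (hk : i ≤ k+1) : PRadj k j i ↔ j = i - 1 := by
  unfold PRadj; omega

lemma adj_top (k j : ℕ) (hk : 2 ≤ k) : PRadj k j (k+2) ↔ j = k+1 ∨ j = k+2 := by
  unfold PRadj; omega

lemma adj01 (k j : ℕ) (hk : 2 ≤ k) : (PRadj k j 0 ↔ PRadj k j 1) := by
  unfold PRadj; omega


lemma master (k : ℕ) (α : ℝ) (π : Fin (k+3) → ℝ) (hsum : ∑ v, π v = 1)
    (heq : (PRmat k α).mulVec π = π) (i : Fin (k+3)) :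
    π i = (1-α)/((k:ℝ)+3)
      + ∑ j : Fin (k+3), (if PRadj k j.1 i.1 then α/(PRdeg k j.1 : ℝ) * π j else 0) := by
  have h := congrFun heq i
  rw [Matrix.mulVec, dotProduct] at h
  have : ∀ j : Fin (k+3), PRmat k α i j * π j
      = (1-α)/((k:ℝ)+3) * π j + (if PRadj k j.1 i.1 then α/(PRdeg k j.1 : ℝ) * π j else 0) := by
    intro j
    simp only [PRmat]
    split_ifs <;> ring
  rw [Finset.sum_congr rfl (fun j _ => this j), Finset.sum_add_distrib,
    ← Finset.mul_sum, hsum, mul_one] at h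
  linarith [h]
lemma deg_eq_3 (k j : ℕ) (h1 : j ≠ 0) (h2 : j ≠ k+2) : PRdeg k j = 3 := by
  unfold PRdeg; rw [if_neg h1, if_neg h2]

lemma eq_mid (k : ℕ) (hk : 2 ≤ k) (α : ℝ) (π : Fin (k+3) → ℝ) (hsum : ∑ v, π v = 1)
    (heq : (PRmat k α).mulVec π = π) (i : ℕ) (h2 : 2 ≤ i) (hik : i ≤ k+1) :
    π ⟨i, by omega⟩ = (1-α)/((k:ℝ)+3) + α/3 * π ⟨i-1, by omega⟩ := by
  have h := master k α π hsum heq ⟨i, by omega⟩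
  simp only [Fin.val_mk] at h
  rw [Finset.sum_eq_single (⟨i-1, by omega⟩ : Fin (k+3))] at h
  · simp only [Fin.val_mk] at h
    rw [if_pos ((adj_mid k i (i-1) h2 hik).mpr rfl),
      deg_eq_3 k (i-1) (by omega) (by omega)] at h
    rw [h]; norm_num
  · intro b _ hb
    rw [if_neg]
    rw [adj_mid k i b.1 h2 hik]
    intro hb1
    exact hb (Fin.ext (by simp only [Fin.val_mk]; omega))
  · intro hb; exact absurd (Finset.mem_univ _) hb

lemma eq_top (k : ℕ) (hk : 2 ≤ k) (α : ℝ) (π : Fin (k+3) → ℝ) (hsum : ∑ v, π v = 1)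
    (heq : (PRmat k α).mulVec π = π) :
    π ⟨k+2, by omega⟩ = (1-α)/((k:ℝ)+3) + α/3 * π ⟨k+1, by omega⟩ + α * π ⟨k+2, by omega⟩ := by
  have h := master k α π hsum heq ⟨k+2, by omega⟩
  simp only [Fin.val_mk] at h
  have hne : (⟨k+1, by omega⟩ : Fin (k+3)) ≠ ⟨k+2, by omega⟩ := by
    simp only [ne_eq, Fin.mk.injEq]; omega
  have hsplit : ∀ j : Fin (k+3),
      (if PRadj k j.1 (k+2) then α/(PRdeg k j.1 : ℝ) * π j else 0)
      = (if j = (⟨k+1, by omega⟩ : Fin (k+3)) then α/3 * π j else 0)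
        + (if j = (⟨k+2, by omega⟩ : Fin (k+3)) then α * π j else 0) := by
    intro j
    by_cases h1 : j = (⟨k+1, by omega⟩ : Fin (k+3))
    · subst h1
      rw [if_pos, if_pos rfl, if_neg hne]
      · simp only [Fin.val_mk]
        rw [deg_eq_3 k (k+1) (by omega) (by omega)]
        norm_num
      · simp only [Fin.val_mk]
        rw [adj_top k _ hk]; left; rfl
    · by_cases h2 : j = (⟨k+2, by omega⟩ : Fin (k+3))
      · subst h2
        rw [if_pos, if_neg h1, if_pos rfl]
        · have : PRdeg k (k+2) = 1 := by unfold PRdeg; rw [if_neg (by omega), if_pos rfl]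
          simp only [Fin.val_mk]
          rw [this]
          norm_num
        · simp only [Fin.val_mk]
          rw [adj_top k _ hk]; right; rfl
      · rw [if_neg, if_neg h1, if_neg h2]
        · ring
        · rw [adj_top k _ hk]
          rintro (hc | hc)
          · exact h1 (Fin.ext (by simp only [Fin.val_mk]; omega))
          · exact h2 (Fin.ext (by simp only [Fin.val_mk]; omega))
  rw [Finset.sum_congr rfl (fun j _ => hsplit j), Finset.sum_add_distrib,
    Finset.sum_ite_eq' Finset.univ, Finset.sum_ite_eq' Finset.univ,
    if_pos (Finset.mem_univ _), if_pos (Finset.mem_univ _)] at h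
  linarith [h]

lemma eq01 (k : ℕ) (hk : 2 ≤ k) (α : ℝ) (π : Fin (k+3) → ℝ) (hsum : ∑ v, π v = 1)
    (heq : (PRmat k α).mulVec π = π) :
    π ⟨1, by omega⟩ = π ⟨0, by omega⟩ := by
  have h0 := master k α π hsum heq ⟨0, by omega⟩
  have h1 := master k α π hsum heq ⟨1, by omega⟩
  simp only [Fin.val_mk] at h0 h1
  rw [h0, h1]
  congr 1
  refine Finset.sum_congr rfl (fun j _ => ?_)
  have hiff := adj01 k j.1 hk
  split_ifs with hA hB hB
  · rfl
  · exact absurd (hiff.mpr hA) hB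
  · exact absurd (hiff.mp hB) hA
  · rfl

noncomputable def PRr (k : ℕ) : ℝ := (1 - 1/(k:ℝ))/3
noncomputable def PRt (k : ℕ) : ℝ := (1/(k:ℝ))/((k:ℝ)+3)
noncomputable def PRd (k : ℕ) : ℝ := PRt k / (1 - PRr k)
noncomputable def PRG (k : ℕ) : ℝ := (1 - PRr k ^ k)/(1 - PRr k)
noncomputable def PRP (k : ℕ) : ℝ := 2 + PRr k * PRG k + (k:ℝ) * PRr k ^ (k+1)
noncomputable def PRa (k : ℕ) : ℝ :=
  (1 + PRd k * (PRr k * PRG k + (k:ℝ) * PRr k ^ (k+1))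
    - (k:ℝ)*PRd k - PRr k * ((k:ℝ)*PRd k) - (k:ℝ)*PRt k) / PRP k
noncomputable def PRA (k : ℕ) : ℝ :=
  (k:ℝ)*PRt k + ((k:ℝ) * PRr k^(k+1)) * (PRa k - PRd k) + PRr k * ((k:ℝ) * PRd k)
noncomputable def PRS2 (k : ℕ) : ℝ :=
  (PRa k - PRd k)^2 * PRr k^2 * ((1 - (PRr k^2)^k)/(1 - PRr k^2))
    + 2*(PRd k)*(PRa k - PRd k) * (PRr k * PRG k) + ((k:ℝ)*PRd k)*PRd k
noncomputable def PRF (k : ℕ) : ℝ := (1 - PRA k)^2 + 2*(PRa k)^2 + PRS2 k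

lemma kfacts (k : ℕ) (hk : 2 ≤ k) :
    (2:ℝ) ≤ (k:ℝ) ∧ 0 < PRr k ∧ PRr k < 1/3 ∧ 0 < PRt k := by
  have h2 : (2:ℝ) ≤ (k:ℝ) := by exact_mod_cast hk
  have hkpos : (0:ℝ) < k := by linarith
  have h1k : 1/(k:ℝ) ≤ 1/2 := by
    rw [div_le_div_iff₀ hkpos (by norm_num)]; linarith
  have h1kpos : 0 < 1/(k:ℝ) := by positivity
  refine ⟨h2, ?_, ?_, ?_⟩
  · unfold PRr; linarith
  · unfold PRr; linarith
  · unfold PRt; positivity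

lemma talpha (k : ℕ) (hk : 2 ≤ k) : (1 - (1 - 1/(k:ℝ)))/((k:ℝ)+3) = PRt k := by
  unfold PRt; ring

lemma eq_mid' (k : ℕ) (hk : 2 ≤ k) (π : Fin (k+3) → ℝ) (hsum : ∑ v, π v = 1)
    (heq : (PRmat k (1 - 1/(k:ℝ))).mulVec π = π) (m : ℕ) (hm : m + 2 ≤ k+1) :
    π ⟨m+2, by omega⟩ = PRt k + PRr k * π ⟨m+1, by omega⟩ := by
  have h := eq_mid k hk (1 - 1/(k:ℝ)) π hsum heq (m+2) (by omega) hm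
  rw [talpha k hk] at h
  have : (1 - 1/(k:ℝ))/3 = PRr k := rfl
  rw [this] at h
  exact h

lemma closed_form (k : ℕ) (hk : 2 ≤ k) (π : Fin (k+3) → ℝ) (hsum : ∑ v, π v = 1)
    (heq : (PRmat k (1 - 1/(k:ℝ))).mulVec π = π) :
    ∀ m (h1 : 1 ≤ m) (h2 : m ≤ k),
      π ⟨m+1, by omega⟩ = PRr k ^ m * (π ⟨0, by omega⟩ - PRd k) + PRd k := by
  have h1r : 1 - PRr k ≠ 0 := by
    obtain ⟨_, _, hr13, _⟩ := kfacts k hk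
    intro hc; rw [sub_eq_zero] at hc; rw [← hc] at hr13; norm_num at hr13
  have htd : PRt k = PRd k * (1 - PRr k) := by
    unfold PRd; field_simp
  intro m
  induction m with
  | zero => intro h _; omega
  | succ n ih =>
    intro _ hnk
    rcases Nat.eq_or_lt_of_le (show 1 ≤ n + 1 from by omega) with h1 | h1
    · -- n = 0 : base case m = 1, vertex 2
      have hn : n = 0 := by omega
      subst hn
      have hb := eq_mid' k hk π hsum heq 0 (by omega)
      rw [eq01 k hk (1 - 1/(k:ℝ)) π hsum heq] at hb
      rw [hb, htd]; ring
    · -- n ≥ 1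
      have hstep := eq_mid' k hk π hsum heq n (by omega)
      rw [ih (by omega) (by omega)] at hstep
      rw [hstep, htd]; ring

lemma sum_split (k : ℕ) (f : ℕ → ℝ) :
    ∑ j ∈ Finset.range (k+3), f j
      = f 0 + f 1 + (∑ i ∈ Finset.range k, f (i+2)) + f (k+2) := by
  rw [Finset.sum_range_succ' _ (k+2), Finset.sum_range_succ' _ (k+1),
    Finset.sum_range_succ]
  ring

lemma fin_sum_eq (k : ℕ) (g : Fin (k+3) → ℝ) :
    ∑ v, g v = ∑ j ∈ Finset.range (k+3), (if h : j < k+3 then g ⟨j, h⟩ else 0) := by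
  rw [← Fin.sum_univ_eq_sum_range]
  refine Finset.sum_congr rfl (fun v _ => ?_)
  rw [dif_pos v.2]

lemma geom (x : ℝ) (hx : x ≠ 1) (n : ℕ) :
    ∑ i ∈ Finset.range n, x^i = (1 - x^n)/(1-x) := by
  rw [geom_sum_eq hx]
  rw [div_eq_div_iff (sub_ne_zero.mpr hx) (sub_ne_zero.mpr (Ne.symm hx))]
  ring

lemma norm_formula (k : ℕ) (hk : 2 ≤ k) (π : Fin (k+3) → ℝ)
    (h : IsPageRank k (1 - 1/(k:ℝ)) π) :
    ∑ v : Fin (k+3), ((if (v:ℕ) = k+2 then (1:ℝ) else 0) - π v)^2 = PRF k := by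
  obtain ⟨hpos, hsum, heq⟩ := h
  obtain ⟨hk2, hr0, hr13, ht0⟩ := kfacts k hk
  have hk0 : (k:ℝ) ≠ 0 := by linarith
  have hrne1 : PRr k ≠ 1 := by intro hc; rw [hc] at hr13; norm_num at hr13
  have hr2ne1 : PRr k^2 ≠ 1 := by nlinarith
  have h1r : (0:ℝ) < 1 - PRr k := by linarith
  have hrk1 : PRr k ^ k ≤ 1 := pow_le_one₀ (le_of_lt hr0) (by linarith)
  have hG0 : 0 ≤ PRG k := by
    unfold PRG; apply div_nonneg; linarith; linarith
  have hP0 : PRP k ≠ 0 := by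
    unfold PRP
    have : 0 ≤ PRr k * PRG k := mul_nonneg (le_of_lt hr0) hG0
    have : 0 ≤ (k:ℝ) * PRr k ^ (k+1) := by positivity
    positivity
  set r := PRr k with hr_def
  set d := PRd k with hd_def
  set t := PRt k with ht_def
  set a := π ⟨0, by omega⟩ with ha_def
  -- value of π at vertex 1
  have h1 : π ⟨1, by omega⟩ = a := eq01 k hk _ π hsum heq
  -- closed form for B vertices
  have hB := closed_form k hk π hsum heq
  have hBk : π ⟨k+1, by omega⟩ = r^k * (a - d) + d := hB k (by omega) (by omega)
  -- A vertex
  have hA : π ⟨k+2, by omega⟩ = k * (t + r * π ⟨k+1, by omega⟩) := by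
    have h2 := eq_top k hk (1 - 1/(k:ℝ)) π hsum heq
    rw [talpha k hk] at h2
    have hr' : (1 - 1/(k:ℝ))/3 = r := rfl
    rw [hr'] at h2
    have h3 : (1/(k:ℝ)) * π ⟨k+2, by omega⟩ = t + r * π ⟨k+1, by omega⟩ := by
      linear_combination h2
    rw [← h3]; field_simp
  -- the middle B values as a function of i ∈ range k
  have hmid : ∀ i ∈ Finset.range k,
      (if h : i+2 < k+3 then π ⟨i+2, h⟩ else 0) = (a-d)*r*r^i + d := by
    intro i hi
    rw [Finset.mem_range] at hi
    rw [dif_pos (by omega)]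
    have hidx : π ⟨i+2, by omega⟩ = π ⟨i+1+1, by omega⟩ := rfl
    rw [hidx, hB (i+1) (by omega) (by omega)]
    ring
  -- expansion of the sum of entries
  have hsum' : a + a + ((a-d)*r*((1 - r^k)/(1-r)) + k*d) + π ⟨k+2, by omega⟩ = 1 := by
    rw [fin_sum_eq k π, sum_split] at hsum
    rw [dif_pos (show (0:ℕ) < k+3 by omega), dif_pos (show (1:ℕ) < k+3 by omega),
      dif_pos (show k+2 < k+3 by omega)] at hsum
    rw [Finset.sum_congr rfl hmid] at hsum
    rw [Finset.sum_add_distrib, Finset.sum_const, Finset.card_range, ← Finset.mul_sum,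
      geom r hrne1, nsmul_eq_mul] at hsum
    rw [h1] at hsum
    linear_combination hsum
  -- solve for a
  have ha : a = PRa k := by
    have key : a * PRP k = 1 + d * (r * PRG k + (k:ℝ) * r ^ (k+1))
        - (k:ℝ)*d - r*((k:ℝ)*d) - (k:ℝ)*t := by
      have hGe : PRG k = (1 - r^k)/(1-r) := rfl
      have hsum'' := hsum'
      rw [hA, hBk] at hsum''
      unfold PRP
      rw [hGe]
      linear_combination hsum''
    unfold PRa
    exact (eq_div_iff hP0).mpr key
  -- final computation
  rw [fin_sum_eq k (fun v => ((if (v:ℕ) = k+2 then (1:ℝ) else 0) - π v)^2), sum_split]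
  rw [dif_pos (show (0:ℕ) < k+3 by omega), dif_pos (show (1:ℕ) < k+3 by omega),
    dif_pos (show k+2 < k+3 by omega)]
  simp only [Fin.val_mk]
  rw [if_neg (show ¬ (0:ℕ) = k+2 by omega), if_neg (show ¬ (1:ℕ) = k+2 by omega),
    if_pos trivial]
  have hmid2 : ∀ i ∈ Finset.range k,
      (if h : i+2 < k+3 then
        ((if ((⟨i+2,h⟩ : Fin (k+3)) : ℕ) = k+2 then (1:ℝ) else 0) - π ⟨i+2,h⟩)^2 else 0)
      = (a-d)^2*r^2*(r^2)^i + (2*d*(a-d)*r)*r^i + d^2 := by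
    intro i hi
    rw [Finset.mem_range] at hi
    rw [dif_pos (by omega)]
    simp only [Fin.val_mk]
    rw [if_neg (show ¬ i+2 = k+2 by omega)]
    have hidx : π ⟨i+2, by omega⟩ = π ⟨i+1+1, by omega⟩ := rfl
    rw [hidx, hB (i+1) (by omega) (by omega)]
    ring
  rw [Finset.sum_congr rfl hmid2, Finset.sum_add_distrib, Finset.sum_add_distrib,
    Finset.sum_const, Finset.card_range, ← Finset.mul_sum, ← Finset.mul_sum,
    geom r hrne1, geom (r^2) hr2ne1, nsmul_eq_mul]
  rw [h1, hA, hBk]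
  unfold PRF PRA PRS2 PRG
  rw [← ha]
  ring

open Filter in
lemma tendsto_PRF : Filter.Tendsto PRF Filter.atTop (nhds (67/50)) := by
  have h1k : Tendsto (fun k : ℕ => 1/(k:ℝ)) atTop (nhds 0) :=
    tendsto_one_div_atTop_nhds_zero_nat
  have c1 : Tendsto (fun _ : ℕ => (1:ℝ)) atTop (nhds 1) := tendsto_const_nhds
  have c2 : Tendsto (fun _ : ℕ => (2:ℝ)) atTop (nhds 2) := tendsto_const_nhds
  have hr : Tendsto PRr atTop (nhds (1/3)) := by
    have := ((tendsto_const_nhds : Filter.Tendsto (fun _ : ℕ => (1:ℝ)) atTop (nhds 1)).sub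
      h1k).div_const (3:ℝ)
    convert this using 2 <;> norm_num [PRr]
  have hrbound : ∀ k : ℕ, 2 ≤ k → 0 ≤ PRr k ∧ PRr k ≤ 1/3 := by
    intro k hk
    obtain ⟨_, h1, h2, _⟩ := kfacts k hk
    exact ⟨le_of_lt h1, le_of_lt h2⟩
  have hrk : Tendsto (fun k : ℕ => PRr k ^ k) atTop (nhds 0) := by
    apply squeeze_zero' (eventually_atTop.mpr ⟨2, fun k hk => pow_nonneg (hrbound k hk).1 k⟩)
      (eventually_atTop.mpr ⟨2, fun k hk => pow_le_pow_left₀ (hrbound k hk).1 (hrbound k hk).2 k⟩)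
    exact tendsto_pow_atTop_nhds_zero_of_lt_one (by norm_num) (by norm_num)
  have hr2k : Tendsto (fun k : ℕ => (PRr k ^ 2) ^ k) atTop (nhds 0) := by
    apply squeeze_zero' (eventually_atTop.mpr ⟨2, fun k hk => pow_nonneg (sq_nonneg _) k⟩)
      (eventually_atTop.mpr ⟨2, fun k hk => pow_le_pow_left₀ (sq_nonneg _)
        (by nlinarith [(hrbound k hk).1, (hrbound k hk).2] : PRr k ^ 2 ≤ 1/9) k⟩)
    exact tendsto_pow_atTop_nhds_zero_of_lt_one (by norm_num) (by norm_num)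
  have hkr : Tendsto (fun k : ℕ => (k:ℝ) * PRr k ^ (k+1)) atTop (nhds 0) := by
    apply squeeze_zero'
      (eventually_atTop.mpr ⟨2, fun k hk =>
        mul_nonneg (Nat.cast_nonneg k) (pow_nonneg (hrbound k hk).1 _)⟩)
      (eventually_atTop.mpr ⟨2, fun k hk => ?_⟩)
      (tendsto_self_mul_const_pow_of_lt_one (by norm_num) (by norm_num) :
        Tendsto (fun k : ℕ => (k:ℝ) * (1/3:ℝ)^k) atTop (nhds 0))
    have h1 : PRr k ^ (k+1) ≤ (1/3:ℝ)^(k+1) :=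
      pow_le_pow_left₀ (hrbound k hk).1 (hrbound k hk).2 _
    have h2 : ((1:ℝ)/3)^(k+1) ≤ (1/3:ℝ)^k :=
      pow_le_pow_of_le_one (by norm_num) (by norm_num) (by omega)
    have := le_trans h1 h2
    exact mul_le_mul_of_nonneg_left this (Nat.cast_nonneg k)
  have ht : Tendsto PRt atTop (nhds 0) := by
    apply squeeze_zero' (eventually_atTop.mpr ⟨2, fun k hk => le_of_lt (kfacts k hk).2.2.2⟩)
      (eventually_atTop.mpr ⟨2, fun k hk => ?_⟩) h1k
    unfold PRt
    apply div_le_self (by positivity)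
    have : (2:ℝ) ≤ (k:ℝ) := by exact_mod_cast hk
    linarith
  have hkt : Tendsto (fun k : ℕ => (k:ℝ) * PRt k) atTop (nhds 0) := by
    apply squeeze_zero'
      (eventually_atTop.mpr ⟨2, fun k hk =>
        mul_nonneg (Nat.cast_nonneg k) (le_of_lt (kfacts k hk).2.2.2)⟩)
      (eventually_atTop.mpr ⟨2, fun k hk => ?_⟩) h1k
    have hk2 : (2:ℝ) ≤ (k:ℝ) := by exact_mod_cast hk
    have hk0 : (k:ℝ) ≠ 0 := by linarith
    have : (k:ℝ) * PRt k = 1/((k:ℝ)+3) := by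
      unfold PRt; field_simp
    rw [this]
    apply one_div_le_one_div_of_le (by linarith) (by linarith)
  have hd : Tendsto PRd atTop (nhds 0) := by
    have := ht.div (tendsto_const_nhds.sub hr) (by norm_num : (1:ℝ) - 1/3 ≠ 0)
    convert this using 2 <;> norm_num [PRd, funext_iff]
  have hkd : Tendsto (fun k : ℕ => (k:ℝ) * PRd k) atTop (nhds 0) := by
    have h0 := hkt.div (tendsto_const_nhds.sub hr) (by norm_num : (1:ℝ) - 1/3 ≠ 0)
    have he : (0:ℝ)/(1 - 1/3) = 0 := by norm_num
    rw [he] at h0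
    apply h0.congr
    intro k
    simp only [Pi.div_apply]
    unfold PRd
    ring
  have hG : Tendsto PRG atTop (nhds (3/2)) := by
    have := (c1.sub hrk).div (tendsto_const_nhds.sub hr)
      (by norm_num : (1:ℝ) - 1/3 ≠ 0)
    convert this using 2 <;> norm_num [PRG, funext_iff]
  have hP : Tendsto PRP atTop (nhds (5/2)) := by
    have := (tendsto_const_nhds.add ((hr.mul hG).add hkr) :
      Tendsto (fun k : ℕ => 2 + (PRr k * PRG k + (k:ℝ) * PRr k ^ (k+1))) atTop _)
    convert this using 2 with k
    · unfold PRP; ring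
    · norm_num
  have hPRa : Tendsto PRa atTop (nhds (2/5)) := by
    have hnum : Tendsto (fun k : ℕ => 1 + PRd k * (PRr k * PRG k + (k:ℝ) * PRr k ^ (k+1))
        - (k:ℝ)*PRd k - PRr k * ((k:ℝ)*PRd k) - (k:ℝ)*PRt k) atTop (nhds 1) := by
      have := (((c1.add (hd.mul ((hr.mul hG).add hkr))).sub hkd).sub
        (hr.mul hkd)).sub hkt
      convert this using 2
      norm_num
    have := hnum.div hP (by norm_num : (5:ℝ)/2 ≠ 0)
    convert this using 2 <;> norm_num [PRa, funext_iff]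
  have hPRA : Tendsto PRA atTop (nhds 0) := by
    have := (hkt.add (hkr.mul (hPRa.sub hd))).add (hr.mul hkd)
    convert this using 2 <;> norm_num [PRA]
  have hS2 : Tendsto PRS2 atTop (nhds (1/50)) := by
    have h1 : Tendsto (fun k : ℕ => (PRa k - PRd k)^2 * PRr k^2
        * ((1 - (PRr k^2)^k)/(1 - PRr k^2))) atTop (nhds ((2/5)^2 * (1/3)^2 * (1/(1-(1/3)^2)))) := by
      have := (((hPRa.sub hd).pow 2).mul (hr.pow 2)).mul
        ((c1.sub hr2k).div (tendsto_const_nhds.sub (hr.pow 2))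
          (by norm_num : (1:ℝ) - (1/3)^2 ≠ 0))
      convert this using 2 <;> norm_num
    have h2 : Tendsto (fun k : ℕ => 2*(PRd k)*(PRa k - PRd k) * (PRr k * PRG k))
        atTop (nhds 0) := by
      have := ((c2.mul hd).mul (hPRa.sub hd)).mul (hr.mul hG)
      convert this using 2 <;> norm_num
    have h3 : Tendsto (fun k : ℕ => ((k:ℝ)*PRd k)*PRd k) atTop (nhds 0) := by
      have := hkd.mul hd
      convert this using 2 <;> norm_num
    have := (h1.add h2).add h3
    convert this using 2 <;> norm_num [PRS2]
  have := (((c1.sub hPRA).pow 2).add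
    (c2.mul (hPRa.pow 2))).add hS2
  convert this using 2 <;> norm_num [PRF]


/-- If `π k` is the PageRank vector of `Γ(k)` for `α = 1 - 1/k` and `σ k` is the
PageRank vector of `Γ(k)` for `α = 1` (value `1` at `A`, `0` elsewhere), then
`‖σ(k) - π(k)‖₂ → √(67/50)` as `k → ∞`. -/
theorem pagerank_diff_norm_tendsto (π : ∀ k : ℕ, Fin (k + 3) → ℝ)
    (hπ : ∀ k, 2 ≤ k → IsPageRank k (1 - 1 / (k : ℝ)) (π k))
    (σ : ∀ k : ℕ, Fin (k + 3) → ℝ)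
    (hσ : ∀ k, σ k = fun v => if v.1 = k + 2 then (1 : ℝ) else 0) :
    Filter.Tendsto (fun k : ℕ => Real.sqrt (∑ v, (σ k v - π k v) ^ 2))
      Filter.atTop (nhds (Real.sqrt (67 / 50))) := by
  have hF := tendsto_PRF
  have heqv : (fun k : ℕ => PRF k) =ᶠ[Filter.atTop]
      (fun k : ℕ => ∑ v, (σ k v - π k v)^2) := by
    rw [Filter.EventuallyEq, Filter.eventually_atTop]
    refine ⟨2, fun k hk => ?_⟩
    rw [hσ k]
    exact (norm_formula k hk (π k) (hπ k hk)).symm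
  have h2 : Filter.Tendsto (fun k : ℕ => ∑ v, (σ k v - π k v)^2)
      Filter.atTop (nhds (67/50)) := hF.congr' heqv
  exact (Real.continuous_sqrt.tendsto _).comp h2
end

section
/- For every δ > 0 there exists an integer k ≥ 2 such that, with π(k) the PageRank vector of Γ(k) for α = 1 − 1/k and σ(k) the PageRank vector of Γ(k) for α = 1 (the vector with σ(k)_A = 1 and all other entries 0), the Euclidean norm satisfies ‖σ(k) − π(k)‖₂ ≥ √(67/50) − δ. -/
set_option maxHeartbeats 2000000


open Finset

lemma PRnatsq : ∀ k : ℕ, k^2 ≤ 3^(k+1) := by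
  intro k; induction k with
  | zero => norm_num
  | succ n ih =>
    have h1 : n < 3^n := Nat.lt_pow_self (by norm_num)
    have h2 : (3:ℕ)^(n+2) = 3^(n+1) * 3 := pow_succ 3 (n+1)
    have h3 : (3:ℕ)^(n+1) = 3^n * 3 := pow_succ 3 n
    nlinarith

lemma PRgeom3 (n : ℕ) : ∑ i ∈ Finset.range n, (1/3:ℝ)^i ≤ 3/2 := by
  rw [geom_sum_eq (by norm_num : (1/3:ℝ) ≠ 1)]
  have h : (0:ℝ) ≤ (1/3:ℝ)^n := by positivity
  rw [div_le_iff_of_neg (by norm_num : (1/3:ℝ) - 1 < 0)]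
  linarith

lemma PRsplit (k : ℕ) (f : ℕ → ℝ) :
    ∑ j ∈ range (k+3), f j = f 0 + f 1 + (∑ j ∈ Ico 2 (k+2), f j) + f (k+2) := by
  rw [Finset.sum_range_succ]
  congr 1
  rw [Finset.range_eq_Ico, ← Finset.sum_Ico_consecutive f (by omega : 0 ≤ 2) (by omega : 2 ≤ k+2)]
  congr 1
  rw [show Finset.Ico 0 2 = Finset.range 2 by rw [Finset.range_eq_Ico]]
  simp [Finset.sum_range_succ]

lemma PRrow_s15 (k : ℕ) (α : ℝ) (π : Fin (k+3) → ℝ) (hsum : ∑ v, π v = 1)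
    (heq : (PRmat k α).mulVec π = π) (i : Fin (k+3)) :
    π i = (1-α)/((k:ℝ)+3)
      + ∑ j : Fin (k+3), (if PRadj k j.1 i.1 then α / (PRdeg k j.1 : ℝ) * π j else 0) := by
  have h0 := congrFun heq i
  simp only [Matrix.mulVec, dotProduct] at h0
  have h1 : ∀ j : Fin (k+3), PRmat k α i j * π j
      = (1-α)/((k:ℝ)+3) * π j + (if PRadj k j.1 i.1 then α / (PRdeg k j.1 : ℝ) * π j else 0) := by
    intro j
    simp only [PRmat]
    split_ifs <;> ring
  rw [← h0, Finset.sum_congr rfl (fun j _ => h1 j), Finset.sum_add_distrib, ← Finset.mul_sum,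
    hsum, mul_one]

-- π 0 = π 1
lemma PR01 (k : ℕ) (hk : 2 ≤ k) (α : ℝ) (π : Fin (k+3) → ℝ) (hsum : ∑ v, π v = 1)
    (heq : (PRmat k α).mulVec π = π) :
    π ⟨0, by omega⟩ = π ⟨1, by omega⟩ := by
  rw [PRrow_s15 k α π hsum heq, PRrow_s15 k α π hsum heq]
  congr 1
  apply Finset.sum_congr rfl
  intro j _
  have : PRadj k j.1 (0:ℕ) ↔ PRadj k j.1 (1:ℕ) := by
    unfold PRadj; omega
  simp only [this]

-- recurrence rows
lemma PRrec (k : ℕ) (hk : 2 ≤ k) (α : ℝ) (π : Fin (k+3) → ℝ) (hsum : ∑ v, π v = 1)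
    (heq : (PRmat k α).mulVec π = π) (j : ℕ) (h2 : 2 ≤ j) (hle : j ≤ k+1)
    (hj : j < k+3) (hj' : j - 1 < k+3) :
    π ⟨j, hj⟩ = (1-α)/((k:ℝ)+3) + α/3 * π ⟨j-1, hj'⟩ := by
  rw [PRrow_s15 k α π hsum heq]
  congr 1
  have h1 : ∀ i' : Fin (k+3),
      (if PRadj k i'.1 j then α/(PRdeg k i'.1 : ℝ) * π i' else 0)
      = (if i' = (⟨j-1, hj'⟩ : Fin (k+3)) then α/3 * π i' else 0) := by
    intro i'
    by_cases hc : i' = (⟨j-1, hj'⟩ : Fin (k+3))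
    · subst hc
      rw [if_pos rfl, if_pos]
      · have hd : PRdeg k (j-1) = 3 := by
          simp only [PRdeg]
          rw [if_neg (by omega), if_neg (by omega)]
        rw [hd]; norm_num
      · show PRadj k (j-1) j
        unfold PRadj; omega
    · rw [if_neg hc, if_neg]
      have hne : i'.1 ≠ j - 1 := by
        intro h; exact hc (Fin.ext h)
      have := i'.2
      unfold PRadj; omega
  rw [Finset.sum_congr rfl (fun i' _ => h1 i'), Finset.sum_ite_eq']
  simp

-- A row
lemma PRA_s15 (k : ℕ) (hk : 2 ≤ k) (α : ℝ) (π : Fin (k+3) → ℝ) (hsum : ∑ v, π v = 1)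
    (heq : (PRmat k α).mulVec π = π) :
    π ⟨k+2, by omega⟩ = (1-α)/((k:ℝ)+3) + (α/3 * π ⟨k+1, by omega⟩ + α * π ⟨k+2, by omega⟩) := by
  have e := PRrow_s15 k α π hsum heq ⟨k+2, by omega⟩
  have h1 : ∀ i' : Fin (k+3),
      (if PRadj k i'.1 (k+2) then α/(PRdeg k i'.1 : ℝ) * π i' else 0)
      = (if i' = (⟨k+1, by omega⟩ : Fin (k+3)) then α/3 * π i' else 0)
        + (if i' = (⟨k+2, by omega⟩ : Fin (k+3)) then α * π i' else 0) := by
    intro i'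
    have hv := i'.2
    by_cases h1 : i'.1 = k+1
    · have e1 : i' = (⟨k+1, by omega⟩ : Fin (k+3)) := Fin.ext h1
      rw [if_pos (show PRadj k i'.1 (k+2) by rw [h1]; unfold PRadj; omega),
        if_pos e1,
        if_neg (show ¬ i' = (⟨k+2, by omega⟩ : Fin (k+3)) from fun h => by
          have h' : i'.1 = k+2 := congrArg Fin.val h
          omega),
        show PRdeg k i'.1 = 3 by rw [h1]; unfold PRdeg; rw [if_neg (by omega), if_neg (by omega)]]
      norm_num
    · by_cases h2 : i'.1 = k+2
      · have e2 : i' = (⟨k+2, by omega⟩ : Fin (k+3)) := Fin.ext h2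
        rw [if_pos (show PRadj k i'.1 (k+2) by rw [h2]; unfold PRadj; omega),
          if_neg (show ¬ i' = (⟨k+1, by omega⟩ : Fin (k+3)) from fun h => by
            have h' : i'.1 = k+1 := congrArg Fin.val h
            omega),
          if_pos e2,
          show PRdeg k i'.1 = 1 by rw [h2]; unfold PRdeg; rw [if_neg (by omega), if_pos rfl]]
        norm_num
      · rw [if_neg (show ¬ PRadj k i'.1 (k+2) by unfold PRadj; omega),
          if_neg (show ¬ i' = (⟨k+1, by omega⟩ : Fin (k+3)) from fun h => by
            have h' : i'.1 = k+1 := congrArg Fin.val h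
            omega),
          if_neg (show ¬ i' = (⟨k+2, by omega⟩ : Fin (k+3)) from fun h => by
            have h' : i'.1 = k+2 := congrArg Fin.val h
            omega)]
        norm_num
  rw [Finset.sum_congr rfl (fun i' _ => h1 i'), Finset.sum_add_distrib,
    Finset.sum_ite_eq', Finset.sum_ite_eq'] at e
  simp only [Finset.mem_univ, if_true] at e
  exact e



lemma PRpoly (t : ℝ) (h0 : 0 ≤ t) (h10 : t ≤ 1/10) :
    67/50 - 10*t ≤ (1 - 5/2*t)^2 + (17/8 - 3*t) * ((2/5 - 8/5*t)^2) := by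
  nlinarith [mul_le_mul_of_nonneg_right h10 (mul_nonneg h0 h0), mul_nonneg h0 h0]

lemma PRkey (k : ℕ) (hk : 10 ≤ k) (π : Fin (k+3) → ℝ)
    (h : IsPageRank k (1 - 1/(k:ℝ)) π) :
    (67/50 : ℝ) - 10/(k:ℝ) ≤ ∑ v, ((if v.1 = k+2 then (1:ℝ) else 0) - π v)^2 := by
  obtain ⟨hpos, hsum, heq⟩ := h
  set α : ℝ := 1 - 1/(k:ℝ) with hα
  have hk2 : 2 ≤ k := by omega
  have hk0 : (10:ℝ) ≤ (k:ℝ) := by exact_mod_cast hk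
  have hkpos : (0:ℝ) < (k:ℝ) := by linarith
  set t : ℝ := 1/(k:ℝ) with ht
  have ht0 : 0 < t := by positivity
  have ht10 : t ≤ 1/10 := by
    rw [ht]; rw [div_le_div_iff₀ hkpos (by norm_num)]; linarith
  have h1α : 1 - α = t := by rw [hα]; ring
  have hα1 : α ≤ 1 := by rw [hα]; linarith
  have hα0 : 0 ≤ α := by rw [hα]; linarith
  set β : ℝ := (1-α)/((k:ℝ)+3) with hβ
  have hβ0 : 0 ≤ β := by rw [hβ, h1α]; exact div_nonneg ht0.le (by linarith)
  have hβt : β ≤ t^2 := by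
    rw [hβ, h1α]
    calc t/((k:ℝ)+3) ≤ t/(k:ℝ) := by
          apply div_le_div_of_nonneg_left (le_of_lt ht0) hkpos; linarith
      _ = t^2 := by rw [ht]; ring
  have hkβ : (k:ℝ)*β ≤ t := by
    rw [hβ, h1α, mul_comm, div_mul_eq_mul_div,
      div_le_iff₀ (by linarith : (0:ℝ) < (k:ℝ)+3)]
    nlinarith [ht0]
  -- transfer π to a ℕ-indexed function
  obtain ⟨p, hp, hp'⟩ : ∃ p : ℕ → ℝ, (∀ j (hj : j < k+3), p j = π ⟨j, hj⟩) ∧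
      (∀ j, k+3 ≤ j → p j = 0) :=
    ⟨fun j => if hj : j < k+3 then π ⟨j, hj⟩ else 0,
      fun j hj => dif_pos hj, fun j hj => dif_neg (by omega)⟩
  have hpn : ∀ j, 0 ≤ p j := by
    intro j
    rcases Nat.lt_or_ge j (k+3) with hj | hj
    · rw [hp j hj]; exact hpos _
    · rw [hp' j hj]
  have hp01 : p 0 = p 1 := by
    rw [hp 0 (by omega), hp 1 (by omega)]
    exact PR01 k hk2 α π hsum heq
  have hrec : ∀ j, 2 ≤ j → j ≤ k+1 → p j = β + α/3 * p (j-1) := by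
    intro j h2 hle
    rw [hp j (by omega), hp (j-1) (by omega)]
    exact PRrec k hk2 α π hsum heq j h2 hle (by omega) (by omega)
  have hA : p (k+2) = β + (α/3 * p (k+1) + α * p (k+2)) := by
    rw [hp (k+2) (by omega), hp (k+1) (by omega)]
    exact PRA_s15 k hk2 α π hsum heq
  have hsum' : p 0 + p 1 + (∑ j ∈ Ico 2 (k+2), p j) + p (k+2) = 1 := by
    have h2 : ∑ j ∈ range (k+3), p j = 1 := by
      rw [← Fin.sum_univ_eq_sum_range]
      rw [Finset.sum_congr rfl (fun v _ => hp v.1 v.2)]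
      exact hsum
    rw [← PRsplit k p, h2]
  set r : ℝ := α/3 with hr
  have hr0 : 0 ≤ r := by rw [hr]; linarith
  have hr13 : r ≤ 1/3 := by rw [hr]; linarith
  -- bounds on the B chain
  have hB : ∀ j, 2 ≤ j → j ≤ k+1 →
      r^(j-1) * p 1 ≤ p j ∧ p j ≤ 3/2*β + (1/3)^(j-1) * p 1 := by
    intro j h2
    induction j, h2 using Nat.le_induction with
    | base =>
      intro hle
      rw [hrec 2 le_rfl hle]
      norm_num
      constructor
      · nlinarith [hpn 1]
      · nlinarith [hpn 1]
    | succ n hn ih =>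
      intro hle
      have hb := ih (by omega)
      rw [hrec (n+1) (by omega) hle]
      simp only [Nat.add_sub_cancel]
      have hpow : r^n = r * r^(n-1) := by
        conv_lhs => rw [show n = (n-1)+1 by omega]
        rw [pow_succ']
      have hpow3 : (1/3:ℝ)^n = (1/3) * (1/3)^(n-1) := by
        conv_lhs => rw [show n = (n-1)+1 by omega]
        rw [pow_succ']
      constructor
      · have h1 : r * (r^(n-1) * p 1) ≤ r * p n :=
          mul_le_mul_of_nonneg_left hb.1 hr0
        rw [hpow]; linarith [h1, hβ0]
      · have h1 : r * p n ≤ (1/3) * p n := mul_le_mul_of_nonneg_right hr13 (hpn n)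
        have h2 : (1/3) * p n ≤ (1/3) * (3/2*β + (1/3)^(n-1) * p 1) :=
          mul_le_mul_of_nonneg_left hb.2 (by norm_num)
        rw [hpow3]; linarith [h1, h2, hβ0]
  have hSB0 : 0 ≤ ∑ j ∈ Ico 2 (k+2), p j := Finset.sum_nonneg fun j _ => hpn j
  have hp1le1 : p 1 ≤ 1 := by linarith [hpn 0, hpn (k+2), hsum', hSB0, hp01]
  -- sum of B values
  have hgeo : ∑ j ∈ Ico 2 (k+2), (1/3:ℝ)^(j-1) ≤ 1/2 := by
    rw [Finset.sum_Ico_eq_sum_range]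
    have he : ∀ i, (1/3:ℝ)^(2+i-1) = (1/3)*(1/3)^i := fun i => by
      rw [show 2+i-1 = i+1 by omega, pow_succ']
    rw [Finset.sum_congr rfl (fun i _ => he i), ← Finset.mul_sum,
      show k+2-2 = k by omega]
    linarith [PRgeom3 k, Finset.sum_nonneg (fun i (_ : i ∈ range k) =>
      pow_nonneg (by norm_num : (0:ℝ) ≤ 1/3) i)]
  have hSBle : ∑ j ∈ Ico 2 (k+2), p j ≤ 3/2*t + 1/2 * p 1 := by
    have h1 : ∑ j ∈ Ico 2 (k+2), p j
        ≤ ∑ j ∈ Ico 2 (k+2), (3/2*β + (1/3:ℝ)^(j-1) * p 1) := by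
      apply Finset.sum_le_sum
      intro j hj
      rw [Finset.mem_Ico] at hj
      exact (hB j hj.1 (by omega)).2
    have h2 : ∑ j ∈ Ico 2 (k+2), (3/2*β + (1/3:ℝ)^(j-1) * p 1)
        = (k:ℝ) * (3/2*β) + (∑ j ∈ Ico 2 (k+2), (1/3:ℝ)^(j-1)) * p 1 := by
      rw [Finset.sum_add_distrib, Finset.sum_const, Finset.sum_mul, Nat.card_Ico,
        show k+2-2 = k by omega, nsmul_eq_mul]
    have h3 : (∑ j ∈ Ico 2 (k+2), (1/3:ℝ)^(j-1)) * p 1 ≤ 1/2 * p 1 :=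
      mul_le_mul_of_nonneg_right hgeo (hpn 1)
    linarith [hkβ, h1, h2, h3]
  -- bound on p (k+2)
  have hk3 : ((k:ℝ))^2 ≤ 3^(k+1) := by
    have := PRnatsq k
    have h2 : ((k^2 : ℕ) : ℝ) ≤ ((3^(k+1) : ℕ) : ℝ) := by exact_mod_cast this
    push_cast at h2
    exact h2
  have h3pow : (k:ℝ) * (1/3:ℝ)^(k+1) ≤ t := by
    rw [div_pow, one_pow, ht]
    rw [show (k:ℝ) * (1/3^(k+1)) = (k:ℝ)/3^(k+1) by ring]
    rw [div_le_div_iff₀ (by positivity) hkpos]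
    have hkk : (k:ℝ)*(k:ℝ) = (k:ℝ)^2 := by ring
    linarith [hk3]
  have h3pow' : (1/3:ℝ)^(k+1) ≤ t^2 := by
    have : (k:ℝ) * (1/3:ℝ)^(k+1) ≤ (k:ℝ) * t^2 := by
      rw [show (k:ℝ)*t^2 = t by rw [ht]; field_simp]
      exact h3pow
    have hh : (0:ℝ) < (k:ℝ) := hkpos
    exact le_of_mul_le_mul_left this hh
  have hBk := hB (k+1) (by omega) le_rfl
  rw [Nat.add_sub_cancel] at hBk
  have haeq : p (k+2) * t = β + r * p (k+1) := by
    have h1 : (1-α) * p (k+2) = β + r * p (k+1) := by linear_combination hA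
    rw [← h1, h1α]; ring
  have haub : p (k+2) ≤ 5/2 * t := by
    have h1 : r * p (k+1) ≤ 1/3 * p (k+1) :=
      mul_le_mul_of_nonneg_right hr13 (hpn (k+1))
    have h2 : p (k+1) ≤ 3/2*β + (1/3)^k * p 1 := hBk.2
    have h2' : (1/3:ℝ)^k * p 1 ≤ (1/3)^k := by
      nlinarith [pow_nonneg (by norm_num : (0:ℝ) ≤ 1/3) k, hpn 1]
    have h3 : (1/3:ℝ)^k = 3 * (1/3)^(k+1) := by rw [pow_succ']; ring
    have h5 : p (k+2) * t ≤ 5/2 * t^2 := by linarith [haeq, h1, h2, h2', h3, h3pow', hβt]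
    exact le_of_mul_le_mul_right (by linarith [h5, sq_abs t, (by ring : 5/2*t^2 = 5/2*t*t)]) ht0
  -- lower bound on p 1
  have hc : 2/5 - 8/5*t ≤ p 1 := by linarith [hsum', hSBle, haub, hp01]
  have hc0 : 0 ≤ 2/5 - 8/5*t := by linarith
  -- geometric sum of squares
  set G : ℝ := ∑ i ∈ range k, (r^2)^i with hGdef
  have hG0 : 0 ≤ G := Finset.sum_nonneg fun i _ => pow_nonneg (sq_nonneg r) i
  have hq2 : r^2 ≤ 1/9 := by nlinarith
  have hq1 : 1/9 - t ≤ r^2 := by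
    have hreq : r = (1-t)/3 := by rw [hr, hα]
    rw [hreq]; nlinarith
  have hqk : (r^2)^k ≤ t := by
    have h1 : (r^2)^k ≤ (1/9:ℝ)^k := pow_le_pow_left₀ (sq_nonneg r) hq2 k
    have h2 : ((k:ℕ):ℝ) < ((9^k : ℕ):ℝ) := by
      exact_mod_cast Nat.lt_pow_self (by norm_num : 1 < 9)
    push_cast at h2
    have h3 : (1/9:ℝ)^k = 1/9^k := by rw [div_pow, one_pow]
    have h4 : (1/9:ℝ)^k ≤ 1/(k:ℝ) := by
      rw [h3, div_le_div_iff₀ (by positivity) hkpos]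
      linarith [h2]
    rw [ht]; linarith
  have hG : G * (1 - r^2) = 1 - (r^2)^k := by
    have hgm := geom_sum_mul (r^2) k
    rw [← hGdef] at hgm
    linear_combination -hgm
  have h1q : (0:ℝ) < 1 - r^2 := by nlinarith
  have hGlb : 1 - t ≤ G * (1 - r^2) := by rw [hG]; linarith
  have hS : 1/8 - 3*t ≤ r^2 * G := by
    have step1 : (1/8 - 3*t) * (1 - r^2) ≤ r^2 * (1-t) := by nlinarith
    have step2 : r^2 * (1-t) ≤ r^2 * (G * (1-r^2)) :=
      mul_le_mul_of_nonneg_left hGlb (sq_nonneg r)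
    have step3 : (1/8 - 3*t) * (1-r^2) ≤ (r^2 * G) * (1-r^2) := by nlinarith
    exact le_of_mul_le_mul_right step3 h1q
  -- sum of squares of B values
  have hT1 : ∑ j ∈ Ico 2 (k+2), (r^2)^(j-1) = r^2 * G := by
    rw [Finset.sum_Ico_eq_sum_range, show k+2-2 = k by omega]
    have he : ∀ i, (r^2)^(2+i-1) = r^2 * (r^2)^i := fun i => by
      rw [show 2+i-1 = i+1 by omega, pow_succ']
    rw [Finset.sum_congr rfl (fun i _ => he i), ← Finset.mul_sum, hGdef]
  have hT : (r^2 * G) * (p 1)^2 ≤ ∑ j ∈ Ico 2 (k+2), (p j)^2 := by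
    rw [← hT1, Finset.sum_mul]
    apply Finset.sum_le_sum
    intro j hj
    rw [Finset.mem_Ico] at hj
    have lb := (hB j hj.1 (by omega)).1
    have h1 : (r^2)^(j-1) * (p 1)^2 = (r^(j-1) * p 1)^2 := by
      rw [mul_pow, ← pow_right_comm]
    rw [h1]
    exact pow_le_pow_left₀ (mul_nonneg (pow_nonneg hr0 _) (hpn 1)) lb 2
  -- rewrite the goal
  have hNorm : ∑ v : Fin (k+3), ((if v.1 = k+2 then (1:ℝ) else 0) - π v)^2
      = ∑ j ∈ range (k+3), ((if j = k+2 then (1:ℝ) else 0) - p j)^2 := by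
    rw [← Fin.sum_univ_eq_sum_range (fun j => ((if j = k+2 then (1:ℝ) else 0) - p j)^2)]
    exact Finset.sum_congr rfl fun v _ => by rw [hp v.1 v.2]
  rw [hNorm, PRsplit k]
  rw [if_neg (by omega : ¬ (0:ℕ) = k+2), if_neg (by omega : ¬ (1:ℕ) = k+2), if_pos rfl]
  have hIco : ∑ j ∈ Ico 2 (k+2), ((if j = k+2 then (1:ℝ) else 0) - p j)^2
      = ∑ j ∈ Ico 2 (k+2), (p j)^2 := by
    apply Finset.sum_congr rfl
    intro j hj
    rw [Finset.mem_Ico] at hj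
    rw [if_neg (by omega : ¬ j = k+2)]
    ring
  rw [hIco]
  -- final assembly
  have e0 : (0 - p 0)^2 = (p 1)^2 := by rw [hp01]; ring
  rw [e0]
  have hC0 : (0:ℝ) ≤ (p 1)^2 := sq_nonneg _
  have hc2 : (2/5 - 8/5*t)^2 ≤ (p 1)^2 := pow_le_pow_left₀ hc0 hc 2
  have ha2 : (1 - 5/2*t)^2 ≤ (1 - p (k+2))^2 :=
    pow_le_pow_left₀ (by linarith) (by linarith [haub]) 2
  have hT2 : (1/8 - 3*t) * (p 1)^2 ≤ (r^2*G) * (p 1)^2 :=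
    mul_le_mul_of_nonneg_right hS hC0
  have h178 : (0:ℝ) ≤ 17/8 - 3*t := by linarith
  have hY : (17/8 - 3*t) * ((2/5 - 8/5*t)^2) ≤ (17/8 - 3*t) * (p 1)^2 :=
    mul_le_mul_of_nonneg_left hc2 h178
  have hfinal : 67/50 - 10*t ≤ (1 - 5/2*t)^2 + (17/8 - 3*t) * ((2/5 - 8/5*t)^2) :=
    PRpoly t ht0.le ht10
  have hkt : (10:ℝ)/(k:ℝ) = 10*t := by rw [ht]; ring
  rw [hkt]
  linarith [hT, hT2, hY, hfinal, ha2]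


/-- For every `δ > 0` there is `k ≥ 2` such that the PageRank vectors of `Γ(k)` for
`α = 1 - 1/k` and `α = 1` (the latter being `1` at `A` and `0` elsewhere) satisfy
`‖σ(k) - π(k)‖₂ ≥ √(67/50) - δ`. -/
theorem pagerank_diff_norm_large (δ : ℝ) (hδ : 0 < δ) :
    ∃ k : ℕ, 2 ≤ k ∧
      ∀ π : Fin (k + 3) → ℝ, IsPageRank k (1 - 1 / (k : ℝ)) π →
        Real.sqrt (∑ v, ((if v.1 = k + 2 then (1 : ℝ) else 0) - π v) ^ 2) ≥
          Real.sqrt (67 / 50) - δ := by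
  obtain ⟨m, hm⟩ : ∃ m : ℕ, (10:ℝ)/δ^2 ≤ (m:ℝ) := ⟨⌈(10:ℝ)/δ^2⌉₊, Nat.le_ceil _⟩
  refine ⟨max 10 m, le_trans (by norm_num) (le_max_left _ _), ?_⟩
  set k : ℕ := max 10 m with hkdef
  intro π hπ
  have hk10 : 10 ≤ k := le_max_left _ _
  have hkey := PRkey k hk10 π hπ
  have hkpos : (0:ℝ) < (k:ℝ) := by
    have : (10:ℝ) ≤ (k:ℝ) := by exact_mod_cast hk10
    linarith
  have hkR : (10:ℝ)/δ^2 ≤ (k:ℝ) := by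
    refine le_trans hm ?_
    exact_mod_cast Nat.le_max_right 10 m
  have hδ2 : (0:ℝ) < δ^2 := by positivity
  have h10k : (10:ℝ)/(k:ℝ) ≤ δ^2 := by
    rw [div_le_iff₀ hkpos]
    have h2 : (10:ℝ)/δ^2 * δ^2 ≤ (k:ℝ)*δ^2 := mul_le_mul_of_nonneg_right hkR hδ2.le
    rw [div_mul_cancel₀ _ (ne_of_gt hδ2)] at h2
    linarith
  have hN : 67/50 - δ^2 ≤ ∑ v, ((if v.1 = k + 2 then (1 : ℝ) else 0) - π v) ^ 2 := by
    linarith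
  have key : Real.sqrt (67/50) - δ ≤ Real.sqrt (67/50 - δ^2) := by
    by_cases hcase : 67/50 - δ^2 ≤ 0
    · have h1 : Real.sqrt (67/50) ≤ δ := by
        rw [show δ = Real.sqrt (δ^2) by rw [Real.sqrt_sq hδ.le]]
        exact Real.sqrt_le_sqrt (by linarith)
      have h2 := Real.sqrt_nonneg (67/50 - δ^2)
      linarith
    · push_neg at hcase
      have hs1 := Real.sq_sqrt (le_of_lt hcase)
      have hs2 := Real.sqrt_nonneg (67/50 - δ^2)
      have h3 : (67/50:ℝ) ≤ (Real.sqrt (67/50 - δ^2) + δ)^2 := by nlinarith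
      have h4 : Real.sqrt (67/50) ≤ Real.sqrt (67/50 - δ^2) + δ := by
        calc Real.sqrt (67/50) ≤ Real.sqrt ((Real.sqrt (67/50-δ^2) + δ)^2) :=
              Real.sqrt_le_sqrt h3
          _ = _ := Real.sqrt_sq (by positivity)
      linarith
  rw [ge_iff_le]
  exact le_trans key (Real.sqrt_le_sqrt hN)
end

section
/- For each integer k ≥ 2, let π(k) be the PageRank vector of Γ(k) for α = 1 − 1/k, and let σ(k) be the PageRank vector of Γ(k) for α = 1 (the vector with σ(k)_A = 1 and all other entries 0). Then the ℓ¹ norm ‖σ(k) − π(k)‖₁ converges to 2 as k → ∞. -/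
lemma piA_bound (k : ℕ) (hk : 2 ≤ k) (π : Fin (k + 3) → ℝ)
    (h : IsPageRank k (1 - 1 / (k : ℝ)) π) :
    π ⟨k + 2, by omega⟩ ≤ 3 / (2 * ((k : ℝ) + 3)) + (k : ℝ) / 3 ^ (k + 1) := by
  obtain ⟨hnn, hsum, heq⟩ := h
  set α : ℝ := 1 - 1 / (k : ℝ) with hα
  have hk2 : (2 : ℝ) ≤ (k : ℝ) := by exact_mod_cast hk
  have hkpos : (0 : ℝ) < k := by linarith
  have h1α : 1 - α = 1 / (k : ℝ) := by rw [hα]; ring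
  have hα0 : 0 ≤ α := by
    have h12 : 1 / (k : ℝ) ≤ 1 / 2 := by
      apply one_div_le_one_div_of_le <;> linarith
    rw [hα]; linarith
  have hα1 : α ≤ 1 := by
    have : 0 < 1 / (k : ℝ) := by positivity
    rw [hα]; linarith
  have hn3 : (0 : ℝ) < (k : ℝ) + 3 := by linarith
  set c : ℝ := (1 - α) / ((k : ℝ) + 3) with hc
  have hc' : c = (1 / (k : ℝ)) / ((k : ℝ) + 3) := by rw [hc, h1α]
  have hc0 : 0 ≤ c := by rw [hc']; positivity
  -- componentwise equation
  have hcomp : ∀ (i : ℕ) (hi : i < k + 3), π ⟨i, hi⟩ =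
      c + α * ∑ j, (if PRadj k j.1 i then π j / (PRdeg k j.1 : ℝ) else 0) := by
    intro i hi
    have h1 : (PRmat k α).mulVec π ⟨i, hi⟩ = π ⟨i, hi⟩ := congrFun heq ⟨i, hi⟩
    rw [Matrix.mulVec, dotProduct] at h1
    have h2 : ∀ j : Fin (k + 3), PRmat k α ⟨i, hi⟩ j * π j
        = c * π j + α * (if PRadj k j.1 i then π j / (PRdeg k j.1 : ℝ) else 0) := by
      intro j
      simp only [PRmat, hc]
      split_ifs <;> ring
    calc π ⟨i, hi⟩ = ∑ j, PRmat k α ⟨i, hi⟩ j * π j := h1.symm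
      _ = ∑ j, (c * π j + α * (if PRadj k j.1 i then π j / (PRdeg k j.1 : ℝ) else 0)) :=
          Finset.sum_congr rfl (fun j _ => h2 j)
      _ = c * ∑ j, π j + α * ∑ j, (if PRadj k j.1 i then π j / (PRdeg k j.1 : ℝ) else 0) := by
          rw [Finset.sum_add_distrib, ← Finset.mul_sum, ← Finset.mul_sum]
      _ = c + α * ∑ j, (if PRadj k j.1 i then π j / (PRdeg k j.1 : ℝ) else 0) := by
          rw [hsum, mul_one]
  -- equation at A
  have hA := hcomp (k + 2) (by omega)
  have hsplitA : ∀ j : Fin (k + 3),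
      (if PRadj k j.1 (k + 2) then π j / (PRdeg k j.1 : ℝ) else 0)
      = (if j = (⟨k + 1, by omega⟩ : Fin (k + 3)) then π j / 3 else 0)
        + (if j = (⟨k + 2, by omega⟩ : Fin (k + 3)) then π j else 0) := by
    rintro ⟨j, hj⟩
    simp only [Fin.mk.injEq]
    by_cases h1 : j = k + 1
    · subst h1
      have hadj : PRadj k (k + 1) (k + 2) := by unfold PRadj; omega
      have hdeg : PRdeg k (k + 1) = 3 := by simp [PRdeg]
      simp [hadj, hdeg]
    · by_cases h2 : j = k + 2
      · subst h2
        have hadj : PRadj k (k + 2) (k + 2) := by unfold PRadj; omega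
        have hdeg : PRdeg k (k + 2) = 1 := by simp [PRdeg]
        simp [hadj, hdeg, h1]
      · have hadj : ¬ PRadj k j (k + 2) := by unfold PRadj; omega
        simp [hadj, h1, h2]
  rw [Finset.sum_congr rfl (fun j _ => hsplitA j), Finset.sum_add_distrib] at hA
  simp only [Finset.sum_ite_eq', Finset.mem_univ, if_true] at hA
  -- hA : π ⟨k+2,_⟩ = c + α * (π ⟨k+1,_⟩ / 3 + π ⟨k+2,_⟩)
  -- recurrence
  have hrec : ∀ m : ℕ, ∀ hm : m + 1 < k + 3, 1 ≤ m → m ≤ k →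
      π ⟨m + 1, hm⟩ = c + α / 3 * π ⟨m, by omega⟩ := by
    intro m hm hm1 hmk
    have h := hcomp (m + 1) (by omega)
    have hsplit : ∀ j : Fin (k + 3),
        (if PRadj k j.1 (m + 1) then π j / (PRdeg k j.1 : ℝ) else 0)
        = (if j = (⟨m, by omega⟩ : Fin (k + 3)) then π j / 3 else 0) := by
      rintro ⟨j, hj⟩
      simp only [Fin.mk.injEq]
      by_cases h1 : j = m
      · subst h1
        have hadj : PRadj k j (j + 1) := by unfold PRadj; omega
        have hdeg : PRdeg k j = 3 := by
          have e0 : j ≠ 0 := by omega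
          have e2 : j ≠ k + 2 := by omega
          simp [PRdeg, e0, e2]
        simp [hadj, hdeg]
      · have hadj : ¬ PRadj k j (m + 1) := by unfold PRadj; omega
        simp [hadj, h1]
    rw [Finset.sum_congr rfl (fun j _ => hsplit j)] at h
    simp only [Finset.sum_ite_eq', Finset.mem_univ, if_true] at h
    rw [h]; ring
  have hle1 : ∀ v, π v ≤ 1 := by
    intro v
    calc π v ≤ ∑ w, π w := Finset.single_le_sum (fun w _ => hnn w) (Finset.mem_univ v)
      _ = 1 := hsum
  have hinv : (0:ℝ) < 1 / (k : ℝ) := by positivity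
  have hbound : ∀ m : ℕ, ∀ hm : m + 1 < k + 3, m ≤ k →
      π ⟨m + 1, hm⟩ ≤ 3 / 2 * c + (1 / 3 : ℝ) ^ m := by
    intro m
    induction m with
    | zero =>
      intro hm _
      have := hle1 ⟨1, by omega⟩
      simp only [pow_zero]
      linarith
    | succ m ih =>
      intro hm hmk
      rw [hrec (m + 1) hm (by omega) hmk]
      have hπm := ih (by omega) (by omega)
      have hπnn := hnn ⟨m + 1, by omega⟩
      have hmul : α / 3 * π ⟨m + 1, by omega⟩ ≤ 1 / 3 * (3 / 2 * c + (1 / 3 : ℝ) ^ m) := by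
        apply mul_le_mul (by linarith [hinv]) hπm hπnn (by norm_num)
      have hp : (0:ℝ) ≤ (1/3:ℝ) ^ m := by positivity
      rw [pow_succ]
      linarith
  -- combine
  have hB := hbound k (by omega) (le_refl k)
  have hBnn := hnn ⟨k + 1, by omega⟩
  -- from hA : π_A = c + α * (π_B/3 + π_A), and 1 - α = 1/k
  set pA := π ⟨k + 2, by omega⟩ with hpA
  set pB := π ⟨k + 1, by omega⟩ with hpB
  have hAeq : pA * (1 - α) = c + α * pB / 3 := by
    rw [hpA, hpB]
    nlinarith [hA]
  have hA' : pA = (k : ℝ) * c + (k : ℝ) * (α * pB) / 3 := by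
    have hk0 : (k : ℝ) ≠ 0 := ne_of_gt hkpos
    rw [h1α] at hAeq
    field_simp at hAeq ⊢
    linarith
  have hαB : α * pB ≤ 3 / 2 * c + (1 / 3 : ℝ) ^ k := by
    calc α * pB ≤ 1 * pB := mul_le_mul_of_nonneg_right hα1 hBnn
      _ = pB := one_mul _
      _ ≤ _ := hB
  have hfin : (k : ℝ) * c + (k : ℝ) * (3 / 2 * c + (1 / 3 : ℝ) ^ k) / 3
      = 3 / (2 * ((k : ℝ) + 3)) + (k : ℝ) / 3 ^ (k + 1) := by
    rw [hc', one_div_pow]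
    have h3 : (3 : ℝ) ^ k ≠ 0 := by positivity
    field_simp
    ring
  rw [hA']
  calc (k : ℝ) * c + (k : ℝ) * (α * pB) / 3
      ≤ (k : ℝ) * c + (k : ℝ) * (3 / 2 * c + (1 / 3 : ℝ) ^ k) / 3 := by
        have : (k : ℝ) * (α * pB) ≤ (k : ℝ) * (3 / 2 * c + (1 / 3 : ℝ) ^ k) :=
          mul_le_mul_of_nonneg_left hαB (le_of_lt hkpos)
        linarith
    _ = _ := hfin


open Filter

/-- If `π k` is the PageRank vector of `Γ(k)` for `α = 1 - 1/k` and `σ k` is the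
PageRank vector of `Γ(k)` for `α = 1` (value `1` at `A`, `0` elsewhere), then
`‖σ(k) - π(k)‖₁ → 2` as `k → ∞`. -/
theorem pagerank_diff_l1_norm_tendsto (π : ∀ k : ℕ, Fin (k + 3) → ℝ)
    (hπ : ∀ k, 2 ≤ k → IsPageRank k (1 - 1 / (k : ℝ)) (π k))
    (σ : ∀ k : ℕ, Fin (k + 3) → ℝ)
    (hσ : ∀ k, σ k = fun v => if v.1 = k + 2 then (1 : ℝ) else 0) :
    Filter.Tendsto (fun k : ℕ => ∑ v, |σ k v - π k v|)
      Filter.atTop (nhds 2) := by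
  have key : ∀ k : ℕ, 2 ≤ k →
      (∑ v, |σ k v - π k v|) = 2 - 2 * π k ⟨k + 2, by omega⟩ := by
    intro k hk
    obtain ⟨hnn, hsum, -⟩ := hπ k hk
    have hle1 : π k ⟨k + 2, by omega⟩ ≤ 1 := by
      calc π k ⟨k + 2, by omega⟩ ≤ ∑ w, π k w :=
            Finset.single_le_sum (fun w _ => hnn w) (Finset.mem_univ _)
        _ = 1 := hsum
    have hpt : ∀ v : Fin (k + 3), |σ k v - π k v|
        = (if v = (⟨k + 2, by omega⟩ : Fin (k + 3)) then 1 - 2 * π k v else 0) + π k v := by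
      intro v
      rw [hσ k]
      dsimp only
      by_cases h : v = ⟨k + 2, by omega⟩
      · subst h
        have e1 : (if ((⟨k + 2, by omega⟩ : Fin (k + 3)) : ℕ) = k + 2 then (1:ℝ) else 0)
            = 1 := if_pos rfl
        have e2 : (if (⟨k + 2, by omega⟩ : Fin (k + 3)) = (⟨k + 2, by omega⟩ : Fin (k + 3))
              then 1 - 2 * π k (⟨k + 2, by omega⟩ : Fin (k + 3)) else 0)
            = 1 - 2 * π k (⟨k + 2, by omega⟩ : Fin (k + 3)) := if_pos rfl
        rw [e1, e2, abs_of_nonneg (by linarith)]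
        ring
      · have hv : ¬ (v : ℕ) = k + 2 := fun hv => h (Fin.ext hv)
        simp only [hv, if_neg h, if_false]
        rw [zero_sub, abs_neg, abs_of_nonneg (hnn v), zero_add]
    calc (∑ v, |σ k v - π k v|)
        = ∑ v : Fin (k + 3),
            ((if v = (⟨k + 2, by omega⟩ : Fin (k + 3)) then 1 - 2 * π k v else 0) + π k v) :=
          Finset.sum_congr rfl (fun v _ => hpt v)
      _ = 2 - 2 * π k ⟨k + 2, by omega⟩ := by
          rw [Finset.sum_add_distrib, hsum]
          simp only [Finset.sum_ite_eq', Finset.mem_univ, if_true]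
          ring
  have hb : Tendsto (fun k : ℕ => 3 / (2 * ((k : ℝ) + 3)) + (k : ℝ) / 3 ^ (k + 1))
      atTop (nhds 0) := by
    have h1 : Tendsto (fun k : ℕ => 3 / (2 * ((k : ℝ) + 3))) atTop (nhds 0) := by
      apply Tendsto.div_atTop tendsto_const_nhds
      apply Tendsto.const_mul_atTop (by norm_num : (0:ℝ) < 2)
      exact tendsto_atTop_add_const_right _ 3 tendsto_natCast_atTop_atTop
    have h2 : Tendsto (fun k : ℕ => (k : ℝ) / 3 ^ (k + 1)) atTop (nhds 0) := by
      have hg : Tendsto (fun k : ℕ => ((2:ℝ)/3) ^ k) atTop (nhds 0) :=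
        tendsto_pow_atTop_nhds_zero_of_lt_one (by norm_num) (by norm_num)
      apply squeeze_zero (fun k => by positivity) _ hg
      intro k
      have h1k : (k : ℝ) ≤ 2 ^ k := by exact_mod_cast (Nat.lt_two_pow_self (n := k)).le
      calc (k : ℝ) / 3 ^ (k + 1) ≤ (2:ℝ) ^ k / 3 ^ (k + 1) := by gcongr
        _ ≤ (2:ℝ) ^ k / 3 ^ k :=
            div_le_div_of_nonneg_left (by positivity) (by positivity)
              (pow_le_pow_right₀ (by norm_num) (by omega))
        _ = ((2:ℝ)/3) ^ k := by rw [div_pow]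
    simpa using h1.add h2
  have hπ0 : Tendsto (fun k : ℕ => π k ⟨k + 2, by omega⟩) atTop (nhds 0) := by
    apply squeeze_zero' ?_ ?_ hb
    · filter_upwards [eventually_ge_atTop 2] with k hk
      exact (hπ k hk).1 _
    · filter_upwards [eventually_ge_atTop 2] with k hk
      exact piA_bound k hk (π k) (hπ k hk)
  have hmain : Tendsto (fun k : ℕ => 2 - 2 * π k ⟨k + 2, by omega⟩) atTop (nhds 2) := by
    have := (hπ0.const_mul 2).const_sub 2
    simpa using this
  apply Filter.Tendsto.congr' ?_ hmain
  filter_upwards [eventually_ge_atTop 2] with k hk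
  exact (key k hk).symm
end
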